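/- arXiv:2307.15389 — 9 statements merged into one kernel-verified Lean document; each statement's English description precedes it below -/
import Mathlib

section
/- Let Ω be a nonempty subset of ℝ^s, let C ⊆ ℝ^s be a nonempty closed convex set, let x̄ ∈ Ω ∩ C, and suppose Ω is locally closed around x̄. Then the proximal normal cone with respect to C satisfies N^p_C(x̄,Ω) = {x* ∈ ℝ^s : ∃ p > 0 such that x̄ + p x* ∈ C and ⟨x*, x − x̄⟩ ≤ (1/(2p))‖x − x̄‖² for all x ∈ Ω ∩ C}. -/
open Set Metric Filter Topology
open scoped RealInnerProductSpace

variable {E : Type*} [NormedAddCommGroup E] [InnerProductSpace ℝ E]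
variable {F' : Type*} [NormedAddCommGroup F'] [InnerProductSpace ℝ F']

/-- `Π(x,Ω)`: the set of closest points (Euclidean projectors) of `x` in `Ω`. -/
def projSet (x : E) (Ω : Set E) : Set E := {u | u ∈ Ω ∧ ‖u - x‖ = Metric.infDist x Ω}

/-- `Π⁻¹(u,Ω)`. -/
def projInv (u : E) (Ω : Set E) : Set E := {x | u ∈ projSet x Ω}

/-- The proximal normal cone to `Ω` at `x` with respect to `C`:
`N^p_C(x,Ω) = {v | ∃ t > 0, x + t v ∈ Π⁻¹(x, Ω ∩ C) ∩ C}`. -/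
def proxNC (C Ω : Set E) (x : E) : Set E :=
  {v | ∃ t > (0 : ℝ), x + t • v ∈ projInv x (Ω ∩ C) ∩ C}

/-- The limiting normal cone to `Ω` at `x` with respect to `C`
(sequential Painlevé–Kuratowski outer limit of `N^p_C(·,Ω)` over `Ω ∩ C ∋ x_k → x`). -/
def limNC (C Ω : Set E) (x : E) : Set E :=
  {v | ∃ (xs vs : ℕ → E),
    (∀ k, xs k ∈ Ω ∩ C) ∧ Filter.Tendsto xs Filter.atTop (nhds x) ∧
    (∀ k, vs k ∈ proxNC C Ω (xs k)) ∧ Filter.Tendsto vs Filter.atTop (nhds v)}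

lemma prox_aux {G : Type*} [NormedAddCommGroup G] [InnerProductSpace ℝ G]
    (v w : G) (t : ℝ) (ht : 0 < t) :
    ⟪v, w⟫ ≤ 1 / (2 * t) * ‖w‖ ^ 2 ↔ ‖t • v‖ ≤ ‖w - t • v‖ := by
  have h1 : ‖w - t • v‖ ^ 2 = ‖w‖ ^ 2 - 2 * ⟪w, t • v⟫ + ‖t • v‖ ^ 2 :=
    norm_sub_sq_real w (t • v)
  have h2 : ⟪w, t • v⟫ = t * ⟪v, w⟫ := by
    rw [real_inner_smul_right, real_inner_comm]
  have hd : (1 : ℝ) / (2 * t) * ‖w‖ ^ 2 = ‖w‖ ^ 2 / (2 * t) := by ring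
  rw [hd, le_div_iff₀ (by positivity)]
  constructor
  · intro h
    have hsq : ‖t • v‖ ^ 2 ≤ ‖w - t • v‖ ^ 2 := by nlinarith
    exact (pow_le_pow_iff_left₀ (norm_nonneg _) (norm_nonneg _) two_ne_zero).mp hsq
  · intro h
    have hsq : ‖t • v‖ ^ 2 ≤ ‖w - t • v‖ ^ 2 :=
      pow_le_pow_left₀ (norm_nonneg _) h 2
    nlinarith

/-- Proposition 1(i): description of the proximal normal cone with respect to a set. -/
theorem stmt0 {s : ℕ} (Ω C : Set (EuclideanSpace ℝ (Fin s))) (hΩne : Ω.Nonempty)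
    (hCne : C.Nonempty) (hCcl : IsClosed C) (hCcv : Convex ℝ C)
    (xb : EuclideanSpace ℝ (Fin s)) (hxb : xb ∈ Ω ∩ C)
    (hloc : ∃ r > (0 : ℝ), IsClosed (Ω ∩ Metric.closedBall xb r)) :
    proxNC C Ω xb =
      {v | ∃ p > (0 : ℝ), xb + p • v ∈ C ∧
        ∀ x ∈ Ω ∩ C, ⟪v, x - xb⟫ ≤ 1 / (2 * p) * ‖x - xb‖ ^ 2} := by
  ext v
  simp only [proxNC, projInv, projSet, mem_setOf_eq, mem_inter_iff]
  constructor
  · rintro ⟨t, ht, ⟨⟨hxΩC, heq⟩, hC⟩⟩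
    refine ⟨t, ht, hC, fun x hx => ?_⟩
    rw [prox_aux v (x - xb) t ht]
    have hle : Metric.infDist (xb + t • v) (Ω ∩ C) ≤ dist (xb + t • v) x :=
      Metric.infDist_le_dist_of_mem hx
    calc ‖t • v‖ = ‖xb - (xb + t • v)‖ := by
          rw [show xb - (xb + t • v) = -(t • v) by abel, norm_neg]
      _ ≤ dist (xb + t • v) x := heq ▸ hle
      _ = ‖x - xb - t • v‖ := by
          rw [dist_comm, dist_eq_norm]; congr 1; abel
  · rintro ⟨p, hp, hC, hineq⟩
    refine ⟨p, hp, ⟨⟨hxb, ?_⟩, hC⟩⟩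
    have hxn : ‖xb - (xb + p • v)‖ = ‖p • v‖ := by
      rw [show xb - (xb + p • v) = -(p • v) by abel, norm_neg]
    refine le_antisymm ?_ ?_
    · rw [hxn]
      refine le_of_not_gt fun hlt => ?_
      obtain ⟨y, hy, hdy⟩ := (Metric.infDist_lt_iff ⟨xb, hxb⟩).mp hlt
      have hge : ‖p • v‖ ≤ dist (xb + p • v) y := by
        rw [dist_eq_norm, show xb + p • v - y = -(y - xb - p • v) by abel, norm_neg]
        exact (prox_aux v (y - xb) p hp).mp (hineq y hy)
      exact absurd hdy (not_lt.mpr hge)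
    · rw [hxn]
      have := Metric.infDist_le_dist_of_mem (x := xb + p • v) hxb
      rwa [dist_eq_norm, show xb + p • v - xb = p • v by abel] at this
end

section
/- Let Ω be a nonempty subset of ℝ^s, let C ⊆ ℝ^s be a nonempty closed convex set, let x̄ ∈ Ω ∩ C, and suppose Ω is locally closed around x̄. Then N^p_C(x̄,Ω) = N^p(x̄, Ω ∩ C) ∩ {x* ∈ ℝ^s : ∃ p > 0 such that x̄ + p x* ∈ C}, where N^p(x̄, Ω ∩ C) is the (classical) proximal normal cone to Ω ∩ C at x̄. -/
open Set Metric Filter Topology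
open scoped RealInnerProductSpace

variable {E : Type*} [NormedAddCommGroup E] [InnerProductSpace ℝ E]
variable {F' : Type*} [NormedAddCommGroup F'] [InnerProductSpace ℝ F']

/-- The classical proximal normal cone `N^p(x,A) = cone[Π⁻¹(x,A) − x]`. -/
def proxNCcl (A : Set E) (x : E) : Set E :=
  {v | ∃ l : ℝ, 0 ≤ l ∧ ∃ u ∈ projInv x A, v = l • (u - x)}


lemma seg_proj {E : Type*} [NormedAddCommGroup E] [NormedSpace ℝ E] (A : Set E)
    (xb u : E) (hxbA : xb ∈ A) (h : ‖xb - u‖ = Metric.infDist u A)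
    (θ : ℝ) (h0 : 0 ≤ θ) (h1 : θ ≤ 1) :
    ‖xb - (xb + θ • (u - xb))‖ = Metric.infDist (xb + θ • (u - xb)) A := by
  set w := xb + θ • (u - xb) with hw
  have hwxb : ‖xb - w‖ = θ * ‖u - xb‖ := by
    have h1' : xb - w = (-θ) • (u - xb) := by rw [hw]; module
    rw [h1', norm_smul]; simp [abs_of_nonneg h0]
  have huw : ‖u - w‖ = (1 - θ) * ‖u - xb‖ := by
    have h2' : u - w = (1 - θ) • (u - xb) := by rw [hw]; module
    rw [h2', norm_smul]; simp [abs_of_nonneg (by linarith : (0:ℝ) ≤ 1 - θ)]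
  refine le_antisymm ?_ ?_
  · by_contra hlt
    push_neg at hlt
    obtain ⟨y, hy, hdy⟩ := (Metric.infDist_lt_iff ⟨xb, hxbA⟩).1 hlt
    have hd : Metric.infDist u A ≤ dist u y := Metric.infDist_le_dist_of_mem hy
    have htri : dist u y ≤ dist u w + dist w y := dist_triangle u w y
    have e1 : dist u w = ‖u - w‖ := dist_eq_norm u w
    have e2 : ‖xb - u‖ = ‖u - xb‖ := norm_sub_rev _ _
    linarith
  · have := Metric.infDist_le_dist_of_mem (x := w) hxbA
    rwa [dist_eq_norm, norm_sub_rev] at this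

/-- Proposition 1(ii), first formula. -/
theorem stmt1 {s : ℕ} (Ω C : Set (EuclideanSpace ℝ (Fin s))) (hΩne : Ω.Nonempty)
    (hCne : C.Nonempty) (hCcl : IsClosed C) (hCcv : Convex ℝ C)
    (xb : EuclideanSpace ℝ (Fin s)) (hxb : xb ∈ Ω ∩ C)
    (hloc : ∃ r > (0 : ℝ), IsClosed (Ω ∩ Metric.closedBall xb r)) :
    proxNC C Ω xb =
      proxNCcl (Ω ∩ C) xb ∩ {v | ∃ p > (0 : ℝ), xb + p • v ∈ C} := by
  ext v
  constructor
  · rintro ⟨t, ht, hproj, hC⟩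
    refine ⟨⟨t⁻¹, le_of_lt (inv_pos.2 ht), xb + t • v, hproj, ?_⟩, t, ht, hC⟩
    rw [add_sub_cancel_left, smul_smul, inv_mul_cancel₀ ht.ne', one_smul]
  · rintro ⟨⟨l, hl, u, hu, hv⟩, p, hp, hpC⟩
    rcases eq_or_lt_of_le hl with hl0 | hl0
    · refine ⟨1, one_pos, ?_, ?_⟩
      · simp only [hv, ← hl0, zero_smul, smul_zero, add_zero]
        exact ⟨hxb, by simp [Metric.infDist_zero_of_mem hxb]⟩
      · simpa [hv, ← hl0] using hxb.2
    · set t := min p l⁻¹ with htdef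
      have htpos : 0 < t := lt_min hp (inv_pos.2 hl0)
      refine ⟨t, htpos, ?_, ?_⟩
      · have hθ0 : 0 ≤ t * l := le_of_lt (mul_pos htpos hl0)
        have hθ1 : t * l ≤ 1 := by
          have : t ≤ l⁻¹ := min_le_right _ _
          calc t * l ≤ l⁻¹ * l := by nlinarith
            _ = 1 := inv_mul_cancel₀ hl0.ne'
        have heq : xb + t • v = xb + (t * l) • (u - xb) := by
          rw [hv, smul_smul]
        rw [heq]
        exact ⟨hxb, seg_proj (Ω ∩ C) xb u hxb hu.2 (t * l) hθ0 hθ1⟩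
      · have hb0 : 0 ≤ t / p := le_of_lt (div_pos htpos hp)
        have hb1 : t / p ≤ 1 := by
          rw [div_le_one hp]; exact min_le_left _ _
        have := hCcv hxb.2 hpC (by linarith : (0:ℝ) ≤ 1 - t / p) hb0 (by ring)
        have heq : (1 - t / p) • xb + (t / p) • (xb + p • v) = xb + t • v := by
          have hc : t / p * p = t := div_mul_cancel₀ t hp.ne'
          rw [smul_add, smul_smul, hc]; module
        rwa [heq] at this
end

section
/- Let Ω be a nonempty subset of ℝ^s, let C ⊆ ℝ^s be a nonempty closed convex set, let x̄ ∈ Ω ∩ C, and suppose Ω is locally closed around x̄. Then N^p_C(x̄,Ω) = {x* ∈ ℝ^s : ∃ θ > 0, δ > 0, p > 0 such that x̄ + p x* ∈ C and ⟨x*, x − x̄⟩ ≤ δ‖x − x̄‖² for all x ∈ Ω ∩ C ∩ B̄(x̄,θ)}. -/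
open Set Metric Filter Topology
open scoped RealInnerProductSpace

variable {E : Type*} [NormedAddCommGroup E] [InnerProductSpace ℝ E]
variable {F' : Type*} [NormedAddCommGroup F'] [InnerProductSpace ℝ F']

/-- Proposition 1(ii), localized formula. -/
theorem stmt2 {s : ℕ} (Ω C : Set (EuclideanSpace ℝ (Fin s))) (hΩne : Ω.Nonempty)
    (hCne : C.Nonempty) (hCcl : IsClosed C) (hCcv : Convex ℝ C)
    (xb : EuclideanSpace ℝ (Fin s)) (hxb : xb ∈ Ω ∩ C)
    (hloc : ∃ r > (0 : ℝ), IsClosed (Ω ∩ Metric.closedBall xb r)) :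
    proxNC C Ω xb =
      {v | ∃ θ > (0 : ℝ), ∃ δ > (0 : ℝ), ∃ p > (0 : ℝ), xb + p • v ∈ C ∧
        ∀ x ∈ Ω ∩ C ∩ Metric.closedBall xb θ, ⟪v, x - xb⟫ ≤ δ * ‖x - xb‖ ^ 2} := by
  ext v
  simp only [Set.mem_setOf_eq]
  constructor
  · rintro ⟨t, ht, ⟨⟨hxbΩC, hdist⟩, hyC⟩⟩
    refine ⟨1, one_pos, 1/(2*t), by positivity, t, ht, hyC, ?_⟩
    rintro x ⟨hxS, _⟩
    have h1 : Metric.infDist (xb + t • v) (Ω ∩ C) ≤ dist (xb + t • v) x :=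
      Metric.infDist_le_dist_of_mem hxS
    have h2 : ‖xb - (xb + t • v)‖ = t * ‖v‖ := by
      simp [norm_smul, abs_of_pos ht]
    have h3 : t * ‖v‖ ≤ ‖x - xb - t • v‖ := by
      have hd : dist (xb + t • v) x = ‖x - xb - t • v‖ := by
        rw [dist_eq_norm, norm_sub_rev]
        congr 1
        abel
      rw [← hd, ← h2, hdist]; exact h1
    have h4 : (t * ‖v‖) ^ 2 ≤ ‖x - xb - t • v‖ ^ 2 := by
      exact pow_le_pow_left₀ (by positivity) h3 2
    have hexp : ‖x - xb - t • v‖ ^ 2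
        = ‖x - xb‖ ^ 2 - 2 * (t * ⟪v, x - xb⟫) + t ^ 2 * ‖v‖ ^ 2 := by
      rw [norm_sub_sq_real, real_inner_smul_right, norm_smul, Real.norm_eq_abs, mul_pow,
        abs_of_pos ht, real_inner_comm]
    rw [hexp] at h4
    have hv2 : (t * ‖v‖) ^ 2 = t ^ 2 * ‖v‖ ^ 2 := by ring
    have key : 2 * t * ⟪v, x - xb⟫ ≤ ‖x - xb‖ ^ 2 := by linarith
    rw [one_div, inv_mul_eq_div, le_div_iff₀ (by positivity)]
    linarith
  · rintro ⟨θ, hθ, δ, hδ, p, hp, hpC, hineq⟩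
    set t : ℝ := min p (min (1/(2*δ)) (θ/(2*(‖v‖+1)))) with htdef
    have ht : 0 < t := by
      apply lt_min hp
      apply lt_min (by positivity) (by positivity)
    have htp : t ≤ p := min_le_left _ _
    have htδ : t ≤ 1/(2*δ) := le_trans (min_le_right _ _) (min_le_left _ _)
    have htθ : t ≤ θ/(2*(‖v‖+1)) := le_trans (min_le_right _ _) (min_le_right _ _)
    have htv : t * ‖v‖ ≤ θ/2 := by
      have h1 : t * ‖v‖ ≤ θ/(2*(‖v‖+1)) * ‖v‖ :=
        mul_le_mul_of_nonneg_right htθ (norm_nonneg v)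
      have h2 : θ/(2*(‖v‖+1)) * ‖v‖ ≤ θ/2 := by
        rw [div_mul_eq_mul_div, div_le_div_iff₀ (by positivity) (by norm_num)]
        nlinarith [norm_nonneg v]
      linarith
    have hpoint : ∀ x ∈ Ω ∩ C, t * ‖v‖ ≤ dist (xb + t • v) x := by
      intro x hxS
      have hd : dist (xb + t • v) x = ‖x - xb - t • v‖ := by
        rw [dist_eq_norm, norm_sub_rev]
        congr 1
        abel
      rw [hd]
      by_cases hcase : ‖x - xb‖ ≤ θ
      · have hball : x ∈ Metric.closedBall xb θ := by
          rw [Metric.mem_closedBall, dist_eq_norm]; exact hcase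
        have hin := hineq x ⟨hxS, hball⟩
        have hexp : ‖x - xb - t • v‖ ^ 2
            = ‖x - xb‖ ^ 2 - 2 * (t * ⟪v, x - xb⟫) + t ^ 2 * ‖v‖ ^ 2 := by
          rw [norm_sub_sq_real, real_inner_smul_right, norm_smul, Real.norm_eq_abs, mul_pow,
            abs_of_pos ht, real_inner_comm]
        have hδt : 2 * t * δ ≤ 1 := by
          rw [le_div_iff₀ (by positivity)] at htδ
          linarith
        have hge : (t * ‖v‖) ^ 2 ≤ ‖x - xb - t • v‖ ^ 2 := by
          rw [hexp]
          nlinarith [norm_nonneg (x - xb), sq_nonneg (‖x - xb‖), mul_nonneg ht.le hδ.le,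
            mul_nonneg (mul_nonneg ht.le hδ.le) (sq_nonneg ‖x - xb‖)]
        exact (pow_le_pow_iff_left₀ (mul_nonneg ht.le (norm_nonneg v))
          (norm_nonneg _) two_ne_zero).mp hge
      · push_neg at hcase
        have htri : ‖x - xb‖ ≤ ‖x - xb - t • v‖ + ‖t • v‖ := by
          calc ‖x - xb‖ = ‖(x - xb - t • v) + t • v‖ := by congr 1; abel
            _ ≤ ‖x - xb - t • v‖ + ‖t • v‖ := norm_add_le _ _
        have hnv : ‖t • v‖ = t * ‖v‖ := by
          simp [norm_smul, abs_of_pos ht]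
        rw [hnv] at htri
        linarith
    refine ⟨t, ht, ⟨⟨hxb, ?_⟩, ?_⟩⟩
    · have h2 : ‖xb - (xb + t • v)‖ = t * ‖v‖ := by
        simp [norm_smul, abs_of_pos ht]
      rw [h2]
      refine le_antisymm ?_ ?_
      · refine le_of_not_gt fun hlt => ?_
        obtain ⟨x, hxS, hdx⟩ := (Metric.infDist_lt_iff ⟨xb, hxb⟩).mp hlt
        exact absurd hdx (not_lt.mpr (hpoint x hxS))
      · calc Metric.infDist (xb + t • v) (Ω ∩ C) ≤ dist (xb + t • v) xb :=
            Metric.infDist_le_dist_of_mem hxb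
          _ = t * ‖v‖ := by
            rw [dist_eq_norm]
            simp [norm_smul, abs_of_pos ht]
    · have hkey : xb + t • v = (1 - t/p) • xb + (t/p) • (xb + p • v) := by
        have hp' : p ≠ 0 := ne_of_gt hp
        rw [smul_add, smul_smul, div_mul_cancel₀ _ hp']
        module
      rw [hkey]
      exact hCcv hxb.2 hpC (by
        have : t/p ≤ 1 := by rw [div_le_one hp]; exact htp
        linarith) (by positivity) (by ring)
end

section
/- Let Ω be a nonempty subset of ℝ^s, let C ⊆ ℝ^s be a nonempty closed convex set, let x̄ ∈ Ω ∩ C, and suppose Ω is locally closed around x̄. Then the proximal normal cone N^p_C(x̄,Ω) with respect to C is a convex cone: it contains 0, is closed under multiplication by positive scalars, and is closed under convex combinations. -/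
open Set Metric Filter Topology
open scoped RealInnerProductSpace

variable {E : Type*} [NormedAddCommGroup E] [InnerProductSpace ℝ E]
variable {F' : Type*} [NormedAddCommGroup F'] [InnerProductSpace ℝ F']

private lemma projInv_iff_aux {E : Type*} [NormedAddCommGroup E] [InnerProductSpace ℝ E]
    (S : Set E) (xb : E) (hxb : xb ∈ S) (v : E) (t : ℝ) :
    xb + t • v ∈ projInv xb S ↔ ∀ u ∈ S, 2 * t * ⟪v, u - xb⟫ ≤ ‖u - xb‖ ^ 2 := by
  simp only [projInv, projSet, Set.mem_setOf_eq]
  have hkey : ∀ u : E, ‖(u - xb) - t • v‖ ^ 2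
      = ‖u - xb‖ ^ 2 - 2 * (t * ⟪v, u - xb⟫) + ‖t • v‖ ^ 2 := by
    intro u
    rw [norm_sub_sq_real, real_inner_smul_right, real_inner_comm]
  have hdist : ∀ u : E, dist (xb + t • v) u = ‖(u - xb) - t • v‖ := by
    intro u; rw [dist_eq_norm, ← norm_neg]; congr 1; abel
  have hnorm : ‖xb - (xb + t • v)‖ = ‖t • v‖ := by
    rw [← norm_neg]; congr 1; abel
  constructor
  · rintro ⟨-, heq⟩ u hu
    have h1 : Metric.infDist (xb + t • v) S ≤ dist (xb + t • v) u :=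
      Metric.infDist_le_dist_of_mem hu
    rw [← heq, hnorm, hdist] at h1
    have h3 : ‖t • v‖ ^ 2 ≤ ‖(u - xb) - t • v‖ ^ 2 := by
      have := norm_nonneg (t • v); nlinarith
    rw [hkey u] at h3
    linarith
  · intro hineq
    refine ⟨hxb, ?_⟩
    rw [hnorm]
    apply le_antisymm
    · refine le_of_not_gt fun hlt => ?_
      obtain ⟨u, hu, hd⟩ := (Metric.infDist_lt_iff ⟨xb, hxb⟩).1 hlt
      rw [hdist] at hd
      have h3 : ‖t • v‖ ^ 2 ≤ ‖(u - xb) - t • v‖ ^ 2 := by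
        rw [hkey u]; have := hineq u hu; linarith
      nlinarith [norm_nonneg (t • v), norm_nonneg ((u - xb) - t • v)]
    · have := Metric.infDist_le_dist_of_mem (x := xb + t • v) hxb
      rwa [dist_eq_norm, show xb + t • v - xb = t • v by abel] at this

/-- Proposition 1(iii): the proximal normal cone with respect to a set is a convex cone. -/
theorem stmt3 {s : ℕ} (Ω C : Set (EuclideanSpace ℝ (Fin s))) (hΩne : Ω.Nonempty)
    (hCne : C.Nonempty) (hCcl : IsClosed C) (hCcv : Convex ℝ C)
    (xb : EuclideanSpace ℝ (Fin s)) (hxb : xb ∈ Ω ∩ C)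
    (hloc : ∃ r > (0 : ℝ), IsClosed (Ω ∩ Metric.closedBall xb r)) :
    (0 : EuclideanSpace ℝ (Fin s)) ∈ proxNC C Ω xb ∧
    (∀ v ∈ proxNC C Ω xb, ∀ l : ℝ, 0 < l → l • v ∈ proxNC C Ω xb) ∧
    Convex ℝ (proxNC C Ω xb) := by
  have hxbS : xb ∈ Ω ∩ C := hxb
  refine ⟨?_, ?_, ?_⟩
  · -- 0 ∈ proxNC
    refine ⟨1, one_pos, ?_, ?_⟩
    · rw [projInv_iff_aux (Ω ∩ C) xb hxbS]
      intro u hu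
      simp only [inner_zero_left, mul_zero]
      positivity
    · simpa using hxb.2
  · -- positive scaling
    rintro v ⟨t, ht, hmem⟩ l hl
    refine ⟨t / l, div_pos ht hl, ?_⟩
    have : (t / l) • (l • v) = t • v := by
      rw [smul_smul, div_mul_cancel₀ _ (ne_of_gt hl)]
    rwa [this]
  · -- convexity
    rintro v hv w hw a b ha hb hab
    rcases eq_or_lt_of_le ha with ha0 | ha
    · have : b = 1 := by linarith
      simpa [← ha0, this] using hw
    rcases eq_or_lt_of_le hb with hb0 | hb
    · have : a = 1 := by linarith
      simpa [← hb0, this] using hv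
    obtain ⟨t₁, ht₁, hv1, hv2⟩ := hv
    obtain ⟨t₂, ht₂, hw1, hw2⟩ := hw
    set t : ℝ := min t₁ t₂ with htdef
    have ht : 0 < t := lt_min ht₁ ht₂
    have htt₁ : t ≤ t₁ := min_le_left _ _
    have htt₂ : t ≤ t₂ := min_le_right _ _
    refine ⟨t, ht, ?_, ?_⟩
    · rw [projInv_iff_aux (Ω ∩ C) xb hxbS]
      intro u hu
      have h1 := (projInv_iff_aux (Ω ∩ C) xb hxbS v t₁).1 hv1 u hu
      have h2 := (projInv_iff_aux (Ω ∩ C) xb hxbS w t₂).1 hw1 u hu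
      have hin : ⟪a • v + b • w, u - xb⟫ = a * ⟪v, u - xb⟫ + b * ⟪w, u - xb⟫ := by
        rw [inner_add_left, real_inner_smul_left, real_inner_smul_left]
      rw [hin]
      have hn : (0 : ℝ) ≤ ‖u - xb‖ ^ 2 := by positivity
      have hv' : 2 * t * ⟪v, u - xb⟫ ≤ ‖u - xb‖ ^ 2 := by
        rcases le_or_gt 0 (⟪v, u - xb⟫) with h | h
        · nlinarith
        · nlinarith
      have hw' : 2 * t * ⟪w, u - xb⟫ ≤ ‖u - xb‖ ^ 2 := by
        rcases le_or_gt 0 (⟪w, u - xb⟫) with h | h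
        · nlinarith
        · nlinarith
      nlinarith [mul_le_mul_of_nonneg_left hv' ha.le,
        mul_le_mul_of_nonneg_left hw' hb.le]
    · -- xb + t • (a•v + b•w) ∈ C
      have hcv : xb + t • v ∈ C := by
        have hkey : xb + t • v = (1 - t / t₁) • xb + (t / t₁) • (xb + t₁ • v) := by
          rw [smul_add, smul_smul, div_mul_cancel₀ _ (ne_of_gt ht₁)]
          module
        rw [hkey]
        exact hCcv hxb.2 hv2 (by rw [sub_nonneg]; exact div_le_one_of_le₀ htt₁ ht₁.le)
          (by positivity) (by ring)
      have hcw : xb + t • w ∈ C := by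
        have hkey : xb + t • w = (1 - t / t₂) • xb + (t / t₂) • (xb + t₂ • w) := by
          rw [smul_add, smul_smul, div_mul_cancel₀ _ (ne_of_gt ht₂)]
          module
        rw [hkey]
        exact hCcv hxb.2 hw2 (by rw [sub_nonneg]; exact div_le_one_of_le₀ htt₂ ht₂.le)
          (by positivity) (by ring)
      have hkey : xb + t • (a • v + b • w) = a • (xb + t • v) + b • (xb + t • w) := by
        have hb' : b = 1 - a := by linarith
        rw [hb']; module
      rw [hkey]
      exact hCcv hcv hcw ha.le hb.le hab
end

section
/- Let Ω be a nonempty subset of ℝ^s, let C ⊆ ℝ^s be a nonempty closed convex set, let x̄ ∈ Ω ∩ C, and suppose Ω is locally closed around x̄. Then N_C(x̄,Ω) = Limsup_{x → x̄, x ∈ C} (cone[x − Π(x, Ω ∩ C)]); that is, x* ∈ N_C(x̄,Ω) if and only if there exist sequences x_k → x̄ with x_k ∈ C and x_k* → x* such that for each k, x_k* = α_k (x_k − u_k) for some α_k ≥ 0 and u_k ∈ Π(x_k, Ω ∩ C). -/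
open Set Metric Filter Topology
open scoped RealInnerProductSpace

variable {E : Type*} [NormedAddCommGroup E] [InnerProductSpace ℝ E]
variable {F' : Type*} [NormedAddCommGroup F'] [InnerProductSpace ℝ F']

/-- If `u` is a closest point to `y` in `S`, then `u` is a closest point to any point
on the segment from `u` to `y`. -/
lemma proj_seg {S : Set E} (hS : S.Nonempty) {u y : E} (hu : u ∈ projSet y S)
    {l : ℝ} (h0 : 0 ≤ l) (h1 : l ≤ 1) : u ∈ projSet (u + l • (y - u)) S := by
  haveI := hS.to_subtype
  refine ⟨hu.1, ?_⟩
  have hnorm : ‖u - (u + l • (y - u))‖ = l * ‖u - y‖ := by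
    have : u - (u + l • (y - u)) = l • (u - y) := by
      rw [smul_sub, smul_sub]; abel
    rw [this, norm_smul, Real.norm_of_nonneg h0]
  refine le_antisymm ?_ ?_
  · rw [infDist_eq_iInf]
    refine le_ciInf fun w' => ?_
    obtain ⟨w, hw⟩ := w'
    have h1' : dist y w ≥ ‖u - y‖ := by
      rw [hu.2]; exact infDist_le_dist_of_mem hw
    have h2 : dist (u + l • (y - u)) w ≥ dist y w - dist y (u + l • (y - u)) := by
      have := dist_triangle y (u + l • (y - u)) w
      linarith
    have h3 : dist y (u + l • (y - u)) = (1 - l) * ‖u - y‖ := by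
      rw [dist_eq_norm]
      have : y - (u + l • (y - u)) = (1 - l) • (y - u) := by
        rw [sub_smul, smul_sub, one_smul]; abel
      rw [this, norm_smul, Real.norm_of_nonneg (by linarith), norm_sub_rev]
    rw [hnorm]
    calc l * ‖u - y‖ = ‖u - y‖ - (1 - l) * ‖u - y‖ := by ring
      _ ≤ dist y w - dist y (u + l • (y - u)) := by rw [h3]; linarith
      _ ≤ dist (u + l • (y - u)) w := h2
      _ = dist (u + l • (y - u)) w := rfl
  · calc infDist (u + l • (y - u)) S ≤ dist (u + l • (y - u)) u :=
        infDist_le_dist_of_mem hu.1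
      _ = ‖u - (u + l • (y - u))‖ := by rw [dist_eq_norm, ← norm_sub_rev]

/-- Proposition 1(v): `N_C(xb,Ω) = Limsup_{x → xb, x ∈ C} cone[x − Π(x, Ω ∩ C)]`. -/
theorem stmt5 {s : ℕ} (Ω C : Set (EuclideanSpace ℝ (Fin s))) (hΩne : Ω.Nonempty)
    (hCne : C.Nonempty) (hCcl : IsClosed C) (hCcv : Convex ℝ C)
    (xb : EuclideanSpace ℝ (Fin s)) (hxb : xb ∈ Ω ∩ C)
    (hloc : ∃ r > (0 : ℝ), IsClosed (Ω ∩ Metric.closedBall xb r)) :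
    limNC C Ω xb =
      {v | ∃ (xs vs : ℕ → EuclideanSpace ℝ (Fin s)) (a : ℕ → ℝ) (u : ℕ → EuclideanSpace ℝ (Fin s)),
        (∀ k, xs k ∈ C) ∧ Filter.Tendsto xs Filter.atTop (nhds xb) ∧
        Filter.Tendsto vs Filter.atTop (nhds v) ∧
        ∀ k, 0 ≤ a k ∧ u k ∈ projSet (xs k) (Ω ∩ C) ∧ vs k = a k • (xs k - u k)} := by
  have hSne : (Ω ∩ C).Nonempty := ⟨xb, hxb⟩
  ext v
  constructor
  · rintro ⟨xs, vs, hxsΩC, hxs, hprox, hvs⟩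
    choose t ht using hprox
    have htpos : ∀ k, 0 < t k := fun k => (ht k).1
    have htmem : ∀ k, xs k + t k • vs k ∈ projInv (xs k) (Ω ∩ C) ∩ C := fun k => (ht k).2
    set t' : ℕ → ℝ := fun k => min (t k) (1 / ((k + 1) * (‖vs k‖ + 1))) with ht'def
    have ht'pos : ∀ k, 0 < t' k := by
      intro k
      refine lt_min (htpos k) ?_
      positivity
    have ht'le : ∀ k, t' k ≤ t k := fun k => min_le_left _ _
    refine ⟨fun k => xs k + t' k • vs k, vs, fun k => (t' k)⁻¹, xs, ?_, ?_, hvs, ?_⟩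
    · -- membership in C by convexity
      intro k
      have h1 : xs k ∈ C := (hxsΩC k).2
      have h2 : xs k + t k • vs k ∈ C := (htmem k).2
      have :=
        hCcv h1 h2 (a := 1 - t' k / t k) (b := t' k / t k)
          (by
            rw [sub_nonneg]
            exact div_le_one_of_le₀ (ht'le k) (htpos k).le)
          (div_nonneg (ht'pos k).le (htpos k).le) (by ring)
      have hteq : (t' k / t k) * t k = t' k := div_mul_cancel₀ _ (htpos k).ne'
      have hxeq : (1 - t' k / t k) • xs k + (t' k / t k) • (xs k + t k • vs k)
          = xs k + t' k • vs k := by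
        rw [smul_add, smul_smul, hteq, sub_smul, one_smul]; abel
      show xs k + t' k • vs k ∈ C
      rw [← hxeq]; exact this
    · -- convergence to xb
      have hz : Filter.Tendsto (fun k => t' k • vs k) Filter.atTop
          (nhds (0 : EuclideanSpace ℝ (Fin s))) := by
        rw [tendsto_zero_iff_norm_tendsto_zero]
        refine squeeze_zero (fun k => norm_nonneg _) (fun k => ?_)
          tendsto_one_div_add_atTop_nhds_zero_nat
        rw [norm_smul, Real.norm_of_nonneg (ht'pos k).le]
        have h1 : t' k ≤ 1 / ((k + 1) * (‖vs k‖ + 1)) := min_le_right _ _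
        have h2 : (0:ℝ) < (k + 1 : ℝ) := by positivity
        have h3 : (0:ℝ) < ‖vs k‖ + 1 := by positivity
        calc t' k * ‖vs k‖ ≤ (1 / ((k + 1) * (‖vs k‖ + 1))) * ‖vs k‖ := by
              have := norm_nonneg (vs k)
              nlinarith [ht'pos k]
          _ ≤ 1 / (k + 1 : ℝ) := by
              rw [div_mul_eq_mul_div, one_mul, div_le_div_iff₀ (by positivity) h2]
              nlinarith [norm_nonneg (vs k)]
      have := hxs.add hz
      simpa using this
    · intro k
      refine ⟨inv_nonneg.mpr (ht'pos k).le, ?_, ?_⟩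
      · -- projection property via the segment lemma
        have hu : xs k ∈ projSet (xs k + t k • vs k) (Ω ∩ C) := (htmem k).1
        have hseg := proj_seg hSne hu (l := t' k / t k) (div_nonneg (ht'pos k).le (htpos k).le)
          (div_le_one_of_le₀ (ht'le k) (htpos k).le)
        convert hseg using 2
        have hteq : (t' k / t k) * t k = t' k := div_mul_cancel₀ _ (htpos k).ne'
        rw [add_sub_cancel_left, smul_smul, hteq]
      · rw [add_sub_cancel_left, smul_smul, inv_mul_cancel₀ (ht'pos k).ne', one_smul]
  · rintro ⟨xs, vs, a, u, hxsC, hxs, hvs, h⟩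
    refine ⟨u, vs, fun k => (h k).2.1.1, ?_, ?_, hvs⟩
    · -- u → xb
      rw [tendsto_iff_dist_tendsto_zero]
      refine squeeze_zero (g := fun k => 2 * dist (xs k) xb) (fun k => dist_nonneg) (fun k => ?_) ?_
      · show dist (u k) xb ≤ 2 * dist (xs k) xb
        have h1 : dist (u k) (xs k) ≤ dist (xs k) xb := by
          rw [dist_comm, dist_eq_norm, ← norm_sub_rev, (h k).2.1.2]
          exact infDist_le_dist_of_mem hxb
        have := dist_triangle (u k) (xs k) xb
        linarith
      · have : Filter.Tendsto (fun k => dist (xs k) xb) Filter.atTop (nhds 0) := by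
          rw [← tendsto_iff_dist_tendsto_zero]; exact hxs
        simpa using this.const_mul 2
    · intro k
      rcases eq_or_lt_of_le (h k).1 with ha | ha
      · -- a k = 0, so vs k = 0
        have hv0 : vs k = 0 := by rw [(h k).2.2, ← ha, zero_smul]
        refine ⟨1, one_pos, ?_, ?_⟩
        · rw [hv0, smul_zero, add_zero]
          exact ⟨((h k).2.1.1), by
            rw [sub_self, norm_zero, infDist_zero_of_mem ((h k).2.1.1)]⟩
        · rw [hv0, smul_zero, add_zero]
          exact (h k).2.1.1.2
      · refine ⟨(a k)⁻¹, inv_pos.mpr ha, ?_, ?_⟩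
        · have : u k + (a k)⁻¹ • vs k = xs k := by
            rw [(h k).2.2, smul_smul, inv_mul_cancel₀ ha.ne', one_smul]
            abel
          rw [this]
          exact (h k).2.1
        · have : u k + (a k)⁻¹ • vs k = xs k := by
            rw [(h k).2.2, smul_smul, inv_mul_cancel₀ ha.ne', one_smul]
            abel
          rw [this]
          exact hxsC k
end

section
/- Let F : ℝ^n ⇒ ℝ^m be a set-valued mapping whose domain dom F := {x : F(x) ≠ ∅} is a nonempty closed convex set, and whose graph is locally closed around (x̄,ȳ) ∈ gph F. Then for every y* ∈ ℝ^m, the relative limiting coderivative satisfies D̄*F(x̄,ȳ)(y*) ⊆ D*F(x̄,ȳ)(y*), where D̄*F := D*_{dom F} F is the limiting coderivative with respect to dom F and D*F is the (classical Mordukhovich) limiting coderivative. -/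
open Set Metric Filter Topology
open scoped RealInnerProductSpace

variable {E : Type*} [NormedAddCommGroup E] [InnerProductSpace ℝ E]
variable {F' : Type*} [NormedAddCommGroup F'] [InnerProductSpace ℝ F']

/-- A pair `(x,y)` as an element of the `L²` (Euclidean) product. -/
noncomputable def toL2 (x : E) (y : F') : WithLp 2 (E × F') :=
  (WithLp.equiv 2 (E × F')).symm (x, y)

/-- The graph of a set-valued map, inside the `L²` product. -/
def gphL2 (F : E → Set F') : Set (WithLp 2 (E × F')) :=
  {p | ((WithLp.equiv 2 (E × F')) p).2 ∈ F ((WithLp.equiv 2 (E × F')) p).1}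

/-- The cylinder `C × ℝ^m` inside the `L²` product. -/
def cylL2 (C : Set E) : Set (WithLp 2 (E × F')) :=
  {p | ((WithLp.equiv 2 (E × F')) p).1 ∈ C}

/-- The limiting coderivative of `F` at `(xb,yb)` with respect to `C`:
`D*_C F(xb,yb)(y*) = {x* | (x*,-y*) ∈ N_{C×ℝ^m}((xb,yb), gph F_C)}`. -/
noncomputable def coderivWRT (C : Set E) (F : E → Set F') (xb : E) (yb : F')
    (ystar : F') : Set E :=
  {xstar | toL2 xstar (-ystar) ∈ limNC (cylL2 C) (gphL2 F ∩ cylL2 C) (toL2 xb yb)}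

/-- The classical (Mordukhovich) limiting normal cone
`N(z,Ω) = Limsup_{z' → z} cone[z' − Π(z',Ω)]`. -/
def limNCcl (Ω : Set E) (z : E) : Set E :=
  {v | ∃ (zs vs : ℕ → E) (a : ℕ → ℝ) (u : ℕ → E),
    Filter.Tendsto zs Filter.atTop (nhds z) ∧ Filter.Tendsto vs Filter.atTop (nhds v) ∧
    ∀ k, 0 ≤ a k ∧ u k ∈ projSet (zs k) Ω ∧ vs k = a k • (zs k - u k)}

/-- The classical limiting coderivative. -/
noncomputable def coderivCl (F : E → Set F') (xb : E) (yb : F') (ystar : F') : Set E :=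
  {xstar | toL2 xstar (-ystar) ∈ limNCcl (gphL2 F) (toL2 xb yb)}

/-- Segment lemma: if `u` is a closest point of `Ω` to `p`, then `u` is a closest
point of `Ω` to any point on the segment from `u` to `p`. -/
lemma projSet_segment {E : Type*} [NormedAddCommGroup E] [NormedSpace ℝ E]
    {Ω : Set E} {u p : E} (hu : u ∈ projSet p Ω) {l : ℝ} (hl0 : 0 ≤ l) (hl1 : l ≤ 1) :
    u ∈ projSet (u + l • (p - u)) Ω := by
  obtain ⟨huΩ, hdist⟩ := hu
  set q := u + l • (p - u) with hq
  have huq : ‖u - q‖ = l * ‖p - u‖ := by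
    have h : u - q = -(l • (p - u)) := by rw [hq]; abel
    rw [h, norm_neg, norm_smul, Real.norm_eq_abs, abs_of_nonneg hl0]
  have hpq : ‖p - q‖ = (1 - l) * ‖p - u‖ := by
    have h : p - q = (1 - l) • (p - u) := by
      rw [hq, sub_smul, one_smul]; abel
    rw [h, norm_smul, Real.norm_eq_abs, abs_of_nonneg (by linarith)]
  refine ⟨huΩ, le_antisymm ?_ ?_⟩
  · by_contra hlt
    push_neg at hlt
    obtain ⟨w, hw, hwd⟩ := (Metric.infDist_lt_iff ⟨u, huΩ⟩).mp hlt
    have h1 : ‖u - p‖ ≤ dist p w := by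
      rw [hdist]; exact Metric.infDist_le_dist_of_mem hw
    have h2 : dist p w ≤ ‖p - q‖ + dist q w := by
      have h := dist_triangle p q w
      rwa [dist_eq_norm p q] at h
    have hup : ‖u - p‖ = ‖p - u‖ := norm_sub_rev u p
    rw [hup] at h1
    rw [hpq] at h2
    rw [huq] at hwd
    linarith
  · have h := Metric.infDist_le_dist_of_mem (x := q) huΩ
    rw [dist_eq_norm, norm_sub_rev] at h
    exact h

set_option maxHeartbeats 1000000 in
set_option synthInstance.maxHeartbeats 400000 in
/-- Proposition 2(ii): the relative limiting coderivative is contained in the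
classical limiting coderivative. -/
theorem stmt7 {n m : ℕ} (F : EuclideanSpace ℝ (Fin n) → Set (EuclideanSpace ℝ (Fin m)))
    (hdomne : {x : EuclideanSpace ℝ (Fin n) | (F x).Nonempty}.Nonempty)
    (hdomcl : IsClosed {x : EuclideanSpace ℝ (Fin n) | (F x).Nonempty})
    (hdomcv : Convex ℝ {x : EuclideanSpace ℝ (Fin n) | (F x).Nonempty})
    (xb : EuclideanSpace ℝ (Fin n)) (yb : EuclideanSpace ℝ (Fin m)) (hgph : yb ∈ F xb)
    (hloc : ∃ r > (0 : ℝ), IsClosed (gphL2 F ∩ Metric.closedBall (toL2 xb yb) r)) :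
    ∀ ystar : EuclideanSpace ℝ (Fin m),
      coderivWRT {x : EuclideanSpace ℝ (Fin n) | (F x).Nonempty} F xb yb ystar ⊆ coderivCl F xb yb ystar := by
  intro ystar xstar hx
  -- the graph is contained in the cylinder over the domain
  have hsub : gphL2 F ⊆ cylL2 {x : EuclideanSpace ℝ (Fin n) | (F x).Nonempty} := by
    intro p hp
    exact ⟨_, hp⟩
  have hinter : gphL2 F ∩ cylL2 {x : EuclideanSpace ℝ (Fin n) | (F x).Nonempty}
      ∩ cylL2 {x : EuclideanSpace ℝ (Fin n) | (F x).Nonempty} = gphL2 F := by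
    rw [Set.inter_assoc, Set.inter_self]
    exact Set.inter_eq_left.mpr hsub
  obtain ⟨xs, vs, hmem, hxs, hprox, hvs⟩ := hx
  choose t ht hP using hprox
  -- shrink the proximal parameter
  set s : ℕ → ℝ := fun k => min (t k) ((1 / (k + 1)) / (‖vs k‖ + 1)) with hs
  have hvpos : ∀ k, (0:ℝ) < ‖vs k‖ + 1 := fun k => by positivity
  have hspos : ∀ k, 0 < s k := fun k =>
    lt_min (ht k) (by positivity)
  have hsle : ∀ k, s k ≤ t k := fun k => min_le_left _ _
  have hsle2 : ∀ k, s k ≤ (1 / (k + 1)) / (‖vs k‖ + 1) := fun k => min_le_right _ _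
  set q : ℕ → WithLp 2 (EuclideanSpace ℝ (Fin n) × EuclideanSpace ℝ (Fin m)) :=
    fun k => xs k + s k • vs k with hqdef
  refine ⟨q, vs, fun k => (s k)⁻¹, xs, ?_, hvs, fun k => ⟨inv_nonneg.mpr (hspos k).le, ?_, ?_⟩⟩
  · -- q tends to the base point
    have hdiff : Filter.Tendsto (fun k => s k • vs k) Filter.atTop (nhds 0) := by
      refine squeeze_zero_norm (fun k => ?_) tendsto_one_div_add_atTop_nhds_zero_nat
      rw [norm_smul, Real.norm_eq_abs, abs_of_pos (hspos k)]
      have h1 : s k * ‖vs k‖ ≤ ((1 / (k + 1)) / (‖vs k‖ + 1)) * ‖vs k‖ :=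
        mul_le_mul_of_nonneg_right (hsle2 k) (norm_nonneg _)
      have h2 : ((1 / (k + 1)) / (‖vs k‖ + 1)) * ‖vs k‖ ≤ 1 / (k + 1) := by
        rw [div_mul_eq_mul_div, div_le_iff₀ (hvpos k)]
        have h3 : (0:ℝ) ≤ 1 / ((k:ℝ) + 1) := by positivity
        nlinarith [norm_nonneg (vs k)]
      linarith
    have hlim : Filter.Tendsto (fun k => xs k + s k • vs k) Filter.atTop
        (nhds (toL2 xb yb + 0)) := hxs.add hdiff
    simpa using hlim
  · -- projection property
    have hproj : xs k ∈ projSet (xs k + t k • vs k)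
        (gphL2 F ∩ cylL2 {x : EuclideanSpace ℝ (Fin n) | (F x).Nonempty}
          ∩ cylL2 {x : EuclideanSpace ℝ (Fin n) | (F x).Nonempty}) := (hP k).1
    rw [hinter] at hproj
    have hseg := projSet_segment hproj
      (l := s k / t k) (div_nonneg (hspos k).le (ht k).le) ((div_le_one (ht k)).mpr (hsle k))
    have harith : xs k + (s k / t k) • (xs k + t k • vs k - xs k) = q k := by
      rw [hqdef]
      simp only [add_sub_cancel_left, smul_smul, div_mul_cancel₀ _ (ht k).ne']
    rwa [harith] at hseg
  · -- algebraic identity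
    rw [hqdef]
    simp only [add_sub_cancel_left, smul_smul, inv_mul_cancel₀ (hspos k).ne', one_smul]
end

section
/- Let C ⊆ ℝ^n be a nonempty closed convex set, F : ℝ^n ⇒ ℝ^m a set-valued mapping, x̄ ∈ C, ȳ ∈ F(x̄), and suppose gph F is locally closed around (x̄,ȳ). If F has the Aubin property with respect to C around (x̄,ȳ) with constant κ ≥ 0, i.e. there exist neighborhoods U of x̄ and V of ȳ such that F(u) ∩ V ⊆ F(x) + κ‖u − x‖𝔹 for all x,u ∈ C ∩ U, then ‖x*‖ ≤ κ‖y*‖ for every y* ∈ ℝ^m and every x* ∈ D*_C F(x̄,ȳ)(y*). -/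
open Set Metric Filter Topology
open scoped RealInnerProductSpace

variable {E : Type*} [NormedAddCommGroup E] [InnerProductSpace ℝ E]
variable {F' : Type*} [NormedAddCommGroup F'] [InnerProductSpace ℝ F']

/-- `F` has the Aubin property with respect to `C` around `(xb,yb)` with constant `k`:
there are neighborhoods `U` of `xb` and `V` of `yb` with
`F(u) ∩ V ⊆ F(x) + k‖u−x‖·𝔹` for all `x,u ∈ C ∩ U`. -/
def AubinWRT (C : Set E) (F : E → Set F') (xb : E) (yb : F') (k : ℝ) : Prop :=
  ∃ U ∈ nhds xb, ∃ V ∈ nhds yb, ∀ x ∈ C ∩ U, ∀ u ∈ C ∩ U, ∀ y ∈ F u ∩ V,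
    ∃ y' ∈ F x, ‖y - y'‖ ≤ k * ‖u - x‖

lemma toL2_fst (x : E) (y : F') : (toL2 x y).fst = x := rfl

lemma toL2_snd (x : E) (y : F') : (toL2 x y).snd = y := rfl

/-- Key estimate: at a reference point in the graph whose components lie in the
neighborhoods from the Aubin property, every proximal normal `v` satisfies
`‖v.1‖ ≤ κ ‖v.2‖`. -/
lemma arithAux (a b c t s κ ε : ℝ) (ha0 : 0 ≤ a) (hb0 : 0 ≤ b) (hc0 : 0 ≤ c)
    (hκ : 0 ≤ κ) (ht : 0 < t) (hs : 0 < s)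
    (hsε : s * ((1 + κ ^ 2) * a ^ 2) ≤ 2 * t * ε)
    (hcsq : c ^ 2 ≤ (κ * (s * a) + t * b) ^ 2)
    (hmain : t ^ 2 * (a ^ 2 + b ^ 2) ≤ ((t - s) * a) ^ 2 + c ^ 2) :
    a * a ≤ κ * a * b + ε := by
  have h3 : 2 * t * s * (a * a) ≤ s * (s * ((1 + κ ^ 2) * a ^ 2)) + 2 * κ * s * t * (a * b) := by
    nlinarith [hmain, hcsq]
  have h4 : s * (s * ((1 + κ ^ 2) * a ^ 2)) ≤ s * (2 * t * ε) :=
    mul_le_mul_of_nonneg_left hsε hs.le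
  have h5 : 2 * t * s * (a * a) ≤ s * (2 * t * ε) + 2 * κ * s * t * (a * b) := by linarith
  nlinarith [h5, mul_pos ht hs]

lemma keyLemma (C : Set E) (hCcv : Convex ℝ C)
    (F : E → Set F') (U : Set E) (hUo : IsOpen U) (V : Set F') (κ : ℝ) (hκ : 0 ≤ κ)
    (hAub : ∀ x ∈ C ∩ U, ∀ u ∈ C ∩ U, ∀ y ∈ F u ∩ V, ∃ y' ∈ F x, ‖y - y'‖ ≤ κ * ‖u - x‖)
    (z : WithLp 2 (E × F')) (hzg : z ∈ gphL2 F) (hzC : z ∈ cylL2 C)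
    (hzU : z.fst ∈ U) (hzV : z.snd ∈ V)
    (v : WithLp 2 (E × F')) (hv : v ∈ proxNC (cylL2 C) (gphL2 F ∩ cylL2 C) z) :
    ‖v.fst‖ ≤ κ * ‖v.snd‖ := by
  obtain ⟨t, ht, hproj, hcylp⟩ := hv
  set p := z + t • v with hp
  set a := ‖v.fst‖ with haa
  set b := ‖v.snd‖ with hbb
  have ha0 : 0 ≤ a := norm_nonneg _
  have hb0 : 0 ≤ b := norm_nonneg _
  have hzC' : z.fst ∈ C := hzC
  have hp1 : p.fst = z.fst + t • v.fst := by
    rw [hp, WithLp.add_fst, WithLp.smul_fst]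
  have hpC : p.fst ∈ C := hcylp
  have hdist : ∀ q ∈ (gphL2 F ∩ cylL2 C) ∩ cylL2 C, ‖z - p‖ ≤ ‖q - p‖ := by
    intro q hq
    rw [hproj.2]
    calc Metric.infDist p ((gphL2 F ∩ cylL2 C) ∩ cylL2 C) ≤ dist p q :=
          Metric.infDist_le_dist_of_mem hq
      _ = ‖q - p‖ := by rw [dist_eq_norm, norm_sub_rev]
  have key2 : ∀ ε > (0 : ℝ), a * a ≤ κ * a * b + ε := by
    intro ε hε
    -- choose a small `s`
    have hcont : ∀ᶠ s : ℝ in nhds 0, z.fst + s • v.fst ∈ U := by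
      have hc : Continuous fun s : ℝ => z.fst + s • v.fst := by continuity
      have h0 : z.fst + (0 : ℝ) • v.fst ∈ U := by simpa using hzU
      exact (hc.tendsto 0).eventually_mem (hUo.mem_nhds h0)
    obtain ⟨δ, hδ, hδU⟩ := Metric.eventually_nhds_iff.mp hcont
    have hD : (0 : ℝ) < (1 + κ ^ 2) * a ^ 2 + 1 := by positivity
    set s : ℝ := min (min (δ / 2) t) (2 * t * ε / ((1 + κ ^ 2) * a ^ 2 + 1)) with hs_def
    have hs : 0 < s := by
      apply lt_min (lt_min (by linarith) ht)
      positivity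
    have hst : s ≤ t := le_trans (min_le_left _ _) (min_le_right _ _)
    have hsδ : s < δ := lt_of_le_of_lt (le_trans (min_le_left _ _) (min_le_left _ _))
      (by linarith)
    have hsU : z.fst + s • v.fst ∈ U := by
      apply hδU
      rw [Real.dist_eq, sub_zero, abs_of_pos hs]
      exact hsδ
    have hsε : s * ((1 + κ ^ 2) * a ^ 2) ≤ 2 * t * ε := by
      have h1 : s ≤ 2 * t * ε / ((1 + κ ^ 2) * a ^ 2 + 1) := min_le_right _ _
      have h2 : s * ((1 + κ ^ 2) * a ^ 2 + 1) ≤ 2 * t * ε := by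
        rw [← div_mul_cancel₀ (2 * t * ε) (ne_of_gt hD)]
        exact mul_le_mul_of_nonneg_right h1 hD.le
      nlinarith [hs.le]
    set u : E := z.fst + s • v.fst with hu_def
    have huC : u ∈ C := by
      have hcomb := hCcv hzC' hpC (a := 1 - s / t) (b := s / t)
        (by rw [sub_nonneg]; exact div_le_one_of_le₀ hst ht.le)
        (by positivity) (by ring)
      have heq : (1 - s / t) • z.fst + (s / t) • p.fst = u := by
        rw [hp1, hu_def, smul_add, smul_smul, div_mul_cancel₀ _ (ne_of_gt ht)]
        rw [sub_smul, one_smul]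
        abel
      rwa [heq] at hcomb
    obtain ⟨y', hy'F, hy'⟩ := hAub u ⟨huC, hsU⟩ z.fst ⟨hzC', hzU⟩ z.snd ⟨hzg, hzV⟩
    have hy'2 : ‖z.snd - y'‖ ≤ κ * (s * a) := by
      have : ‖z.fst - u‖ = s * a := by
        rw [hu_def]
        rw [show z.fst - (z.fst + s • v.fst) = -(s • v.fst) by abel]
        rw [norm_neg, norm_smul, Real.norm_eq_abs, abs_of_pos hs]
      rw [this] at hy'
      linarith
    set q : WithLp 2 (E × F') := toL2 u y' with hq_def
    have hqmem : q ∈ (gphL2 F ∩ cylL2 C) ∩ cylL2 C := ⟨⟨hy'F, huC⟩, huC⟩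
    have hAB := hdist q hqmem
    have hA : ‖z - p‖ = t * ‖v‖ := by
      rw [hp, show z - (z + t • v) = -(t • v) by abel, norm_neg, norm_smul,
        Real.norm_eq_abs, abs_of_pos ht]
    have hq1 : ‖(q - p).fst‖ = (t - s) * a := by
      have h1 : (q - p).fst = (s - t) • v.fst := by
        rw [WithLp.sub_fst, hp1, hq_def, toL2_fst, hu_def, sub_smul]
        abel
      rw [h1, norm_smul, Real.norm_eq_abs, abs_of_nonpos (by linarith), haa]
      ring
    set c : ℝ := ‖(q - p).snd‖ with hc_def
    have hc0 : 0 ≤ c := norm_nonneg _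
    have hc : c ≤ κ * (s * a) + t * b := by
      have h1 : (q - p).snd = (y' - z.snd) - t • v.snd := by
        rw [WithLp.sub_snd, hp, WithLp.add_snd, WithLp.smul_snd, hq_def, toL2_snd]
        abel
      rw [hc_def, h1]
      calc ‖(y' - z.snd) - t • v.snd‖ ≤ ‖y' - z.snd‖ + ‖t • v.snd‖ := norm_sub_le _ _
        _ = ‖z.snd - y'‖ + t * b := by
            rw [norm_sub_rev, norm_smul, Real.norm_eq_abs, abs_of_pos ht]
        _ ≤ κ * (s * a) + t * b := by linarith
    have hABsq : (t * ‖v‖) ^ 2 ≤ ((t - s) * a) ^ 2 + c ^ 2 := by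
      have h1 : ‖z - p‖ ^ 2 ≤ ‖q - p‖ ^ 2 :=
        pow_le_pow_left₀ (norm_nonneg _) hAB 2
      rw [hA, WithLp.prod_norm_sq_eq_of_L2, hq1, ← hc_def] at h1
      exact h1
    have hv2 : ‖v‖ ^ 2 = a ^ 2 + b ^ 2 := WithLp.prod_norm_sq_eq_of_L2 v
    have hcsq : c ^ 2 ≤ (κ * (s * a) + t * b) ^ 2 := pow_le_pow_left₀ hc0 hc 2
    have hmain : t ^ 2 * (a ^ 2 + b ^ 2) ≤ ((t - s) * a) ^ 2 + c ^ 2 := by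
      calc t ^ 2 * (a ^ 2 + b ^ 2) = (t * ‖v‖) ^ 2 := by rw [mul_pow, hv2]
        _ ≤ _ := hABsq
    exact arithAux a b c t s κ ε ha0 hb0 hc0 hκ ht hs hsε hcsq hmain
  have haa2 : a * a ≤ κ * a * b := le_of_forall_pos_le_add key2
  rcases ha0.eq_or_lt with h | h
  · have h0 : a = 0 := h.symm
    rw [h0]
    positivity
  · nlinarith [haa2, h]

/-- Theorem 1, necessity: the Aubin property with respect to `C` with constant `κ`
forces `‖x*‖ ≤ κ‖y*‖` on the coderivative with respect to `C`. -/
theorem stmt8 {n m : ℕ} (C : Set (EuclideanSpace ℝ (Fin n)))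
    (hCne : C.Nonempty) (hCcl : IsClosed C) (hCcv : Convex ℝ C)
    (F : EuclideanSpace ℝ (Fin n) → Set (EuclideanSpace ℝ (Fin m))) (xb : EuclideanSpace ℝ (Fin n)) (yb : EuclideanSpace ℝ (Fin m))
    (hgph : yb ∈ F xb) (hxbC : xb ∈ C)
    (hloc : ∃ r > (0 : ℝ), IsClosed (gphL2 F ∩ Metric.closedBall (toL2 xb yb) r))
    (κ : ℝ) (hκ : 0 ≤ κ) (hAubin : AubinWRT C F xb yb κ) :
    ∀ ystar : EuclideanSpace ℝ (Fin m), ∀ xstar ∈ coderivWRT C F xb yb ystar, ‖xstar‖ ≤ κ * ‖ystar‖ := by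
  intro ystar xstar hx
  obtain ⟨xs, vs, hxsmem, hxs, hvsmem, hvs⟩ := hx
  obtain ⟨U, hU, V, hV, hAub⟩ := hAubin
  obtain ⟨U', hU'sub, hU'o, hxbU'⟩ := _root_.mem_nhds_iff.mp hU
  obtain ⟨V', hV'sub, hV'o, hybV'⟩ := _root_.mem_nhds_iff.mp hV
  have hAub' : ∀ x ∈ C ∩ U', ∀ u ∈ C ∩ U', ∀ y ∈ F u ∩ V',
      ∃ y' ∈ F x, ‖y - y'‖ ≤ κ * ‖u - x‖ := by
    intro x hxm u hum y hym
    exact hAub x ⟨hxm.1, hU'sub hxm.2⟩ u ⟨hum.1, hU'sub hum.2⟩ y ⟨hym.1, hV'sub hym.2⟩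
  set e := WithLp.prodContinuousLinearEquiv 2 ℝ (EuclideanSpace ℝ (Fin n))
    (EuclideanSpace ℝ (Fin m)) with he
  -- component convergence of the base sequence
  have hxs1 : Tendsto (fun k => (xs k).fst) atTop (nhds xb) :=
    (continuous_fst.tendsto _).comp ((e.continuous.tendsto _).comp hxs)
  have hxs2 : Tendsto (fun k => (xs k).snd) atTop (nhds yb) :=
    (continuous_snd.tendsto _).comp ((e.continuous.tendsto _).comp hxs)
  have hUk : ∀ᶠ k in atTop, (xs k).fst ∈ U' := hxs1 (hU'o.mem_nhds hxbU')
  have hVk : ∀ᶠ k in atTop, (xs k).snd ∈ V' := hxs2 (hV'o.mem_nhds hybV')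
  have hkey : ∀ᶠ k in atTop, ‖(vs k).fst‖ ≤ κ * ‖(vs k).snd‖ := by
    filter_upwards [hUk, hVk] with k h1 h2
    exact keyLemma C hCcv F U' hU'o V' κ hκ hAub' (xs k) (hxsmem k).1.1 (hxsmem k).1.2
      h1 h2 (vs k) (hvsmem k)
  have hvs1 : Tendsto (fun k => ‖(vs k).fst‖) atTop (nhds ‖xstar‖) :=
    (continuous_norm.tendsto _).comp
      ((continuous_fst.tendsto _).comp ((e.continuous.tendsto _).comp hvs))
  have hvs2 : Tendsto (fun k => κ * ‖(vs k).snd‖) atTop (nhds (κ * ‖ystar‖)) := by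
    have h2 : Tendsto (fun k => ‖(vs k).snd‖) atTop (nhds ‖(-ystar : EuclideanSpace ℝ (Fin m))‖) :=
      (continuous_norm.tendsto _).comp
        ((continuous_snd.tendsto _).comp ((e.continuous.tendsto _).comp hvs))
    rw [norm_neg] at h2
    exact h2.const_mul κ
  exact le_of_tendsto_of_tendsto hvs1 hvs2 hkey
end

section
/- Let C ⊆ ℝ^n be a nonempty closed convex set, F : ℝ^n ⇒ ℝ^m a set-valued mapping, x̄ ∈ C, ȳ ∈ F(x̄), and suppose gph F is locally closed around (x̄,ȳ). If there is κ ≥ 0 such that ‖x*‖ ≤ κ‖y*‖ for every y* ∈ ℝ^m and every x* ∈ D*_C F(x̄,ȳ)(y*), then for every κ̃ > κ, F has the Aubin property with respect to C around (x̄,ȳ) with constant κ̃, i.e. there exist neighborhoods U of x̄ and V of ȳ such that F(u) ∩ V ⊆ F(x) + κ̃‖u − x‖𝔹 for all x,u ∈ C ∩ U. -/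
open Set Metric Filter Topology
open scoped RealInnerProductSpace


variable {E : Type*} [NormedAddCommGroup E] [InnerProductSpace ℝ E]
variable {F' : Type*} [NormedAddCommGroup F'] [InnerProductSpace ℝ F']

-- sqrt quadratic upper bound
lemma sqrt_quad {A B : ℝ} (hA : 0 < A) (h : 0 ≤ A^2 + B) :
    Real.sqrt (A^2 + B) ≤ A + B/(2*A) := by
  have h2 : 0 ≤ A + B/(2*A) := by
    have h3 : -(A/2) ≤ B/(2*A) := by
      rw [le_div_iff₀ (by positivity)]
      nlinarith
    linarith
  have : A^2 + B ≤ (A + B/(2*A))^2 := by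
    have : (A + B/(2*A))^2 = A^2 + B + (B/(2*A))^2 := by
      field_simp; ring
    nlinarith [sq_nonneg (B/(2*A))]
  calc Real.sqrt (A^2+B) ≤ Real.sqrt ((A + B/(2*A))^2) := Real.sqrt_le_sqrt this
    _ = A + B/(2*A) := Real.sqrt_sq h2

-- norm expansion in an inner product space
lemma norm_expand {H : Type*} [NormedAddCommGroup H] [InnerProductSpace ℝ H]
    (c p₀ h : H) (hA : p₀ ≠ c) :
    ‖p₀ + h - c‖ ≤ ‖p₀ - c‖ + ⟪p₀ - c, h⟫/‖p₀ - c‖ + ‖h‖^2/(2*‖p₀-c‖) := by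
  have hA' : (0:ℝ) < ‖p₀ - c‖ := by
    rw [norm_pos_iff]; exact sub_ne_zero_of_ne hA
  have key : ‖p₀ + h - c‖^2 = ‖p₀-c‖^2 + (2*⟪p₀-c,h⟫ + ‖h‖^2) := by
    have : p₀ + h - c = (p₀ - c) + h := by abel
    rw [this, @norm_add_sq_real]; ring
  have h0 : 0 ≤ ‖p₀-c‖^2 + (2*⟪p₀-c,h⟫ + ‖h‖^2) := by rw [← key]; positivity
  calc ‖p₀ + h - c‖ = Real.sqrt (‖p₀+h-c‖^2) := (Real.sqrt_sq (norm_nonneg _)).symm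
    _ = Real.sqrt (‖p₀-c‖^2 + (2*⟪p₀-c,h⟫ + ‖h‖^2)) := by rw [key]
    _ ≤ ‖p₀-c‖ + (2*⟪p₀-c,h⟫ + ‖h‖^2)/(2*‖p₀-c‖) := sqrt_quad hA' h0
    _ = ‖p₀ - c‖ + ⟪p₀ - c, h⟫/‖p₀ - c‖ + ‖h‖^2/(2*‖p₀-c‖) := by field_simp; ring


lemma mem_projSet_of_quad (S : Set E) (z' : E) (hz' : z' ∈ S) (v : E) (c R t : ℝ)
    (hc : 0 ≤ c) (ht : 0 < t) (htc : 2*t*c ≤ 1) (htv : 2*t*‖v‖ ≤ R)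
    (h1 : ∀ z ∈ S, ‖z - z'‖ ≤ R → ⟪v, z - z'⟫ ≤ c * ‖z - z'‖^2) :
    z' ∈ projSet (z' + t • v) S := by
  have hv0 : 0 ≤ t * ‖v‖ := by positivity
  have key : ∀ z ∈ S, t * ‖v‖ ≤ ‖z - (z' + t • v)‖ := by
    intro z hz
    have hrw : z - (z' + t • v) = (z - z') - t • v := by abel
    by_cases hR : ‖z - z'‖ ≤ R
    · have hsq : (t*‖v‖)^2 ≤ ‖(z - z') - t • v‖^2 := by
        rw [@norm_sub_sq_real]
        have hi : ⟪z - z', t • v⟫ = t * ⟪v, z - z'⟫ := by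
          rw [real_inner_smul_right, real_inner_comm]
        rw [hi, norm_smul, Real.norm_eq_abs, abs_of_pos ht]
        have h2 := h1 z hz hR
        nlinarith [sq_nonneg ‖z - z'‖, norm_nonneg (z - z'), sq_nonneg (t*‖v‖)]
      calc t * ‖v‖ = Real.sqrt ((t*‖v‖)^2) := (Real.sqrt_sq hv0).symm
        _ ≤ Real.sqrt (‖(z - z') - t • v‖^2) := Real.sqrt_le_sqrt hsq
        _ = ‖(z - z') - t • v‖ := Real.sqrt_sq (norm_nonneg _)
        _ = ‖z - (z' + t • v)‖ := by rw [hrw]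
    · push_neg at hR
      have : ‖z - z'‖ - ‖t • v‖ ≤ ‖(z - z') - t • v‖ := by
        have := norm_sub_norm_le (z - z') (t • v)
        linarith [abs_le.mp (abs_norm_sub_norm_le (z - z') (t • v))]
      rw [hrw]
      have h5 : ‖t • v‖ = t*‖v‖ := by rw [norm_smul, Real.norm_eq_abs, abs_of_pos ht]
      rw [h5] at this
      linarith
  have hdist : Metric.infDist (z' + t • v) S = t * ‖v‖ := by
    apply le_antisymm
    · have := Metric.infDist_le_dist_of_mem (x := z' + t • v) hz'
      rw [dist_eq_norm] at this
      simpa [norm_smul, abs_of_pos ht] using this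
    · rw [Metric.infDist_eq_iInf]
      have : Nonempty ↥S := Set.Nonempty.to_subtype ⟨z', hz'⟩
      refine le_ciInf fun z => ?_
      rw [dist_eq_norm, norm_sub_rev]
      exact key z z.2
  refine ⟨hz', ?_⟩
  rw [hdist]
  simp [norm_smul, abs_of_pos ht]


section Helpers
variable {α β : Type*} [NormedAddCommGroup α] [NormedAddCommGroup β]

lemma l2_norm_fst_le (p : WithLp 2 (α × β)) : ‖p.fst‖ ≤ ‖p‖ := by
  have h := WithLp.prod_norm_sq_eq_of_L2 p
  nlinarith [norm_nonneg p, norm_nonneg p.fst, norm_nonneg p.snd, sq_nonneg ‖p.snd‖]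

lemma l2_norm_snd_le (p : WithLp 2 (α × β)) : ‖p.snd‖ ≤ ‖p‖ := by
  have h := WithLp.prod_norm_sq_eq_of_L2 p
  nlinarith [norm_nonneg p, norm_nonneg p.fst, norm_nonneg p.snd, sq_nonneg ‖p.fst‖]

lemma l2_norm_le_add (p : WithLp 2 (α × β)) : ‖p‖ ≤ ‖p.fst‖ + ‖p.snd‖ := by
  have h := WithLp.prod_norm_sq_eq_of_L2 p
  nlinarith [norm_nonneg p, norm_nonneg p.fst, norm_nonneg p.snd,
    mul_nonneg (norm_nonneg p.fst) (norm_nonneg p.snd)]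

end Helpers

section Cone
variable {E : Type*} [NormedAddCommGroup E] [InnerProductSpace ℝ E]

lemma proxNC_smul {C Ω : Set E} {x v : E} (hv : v ∈ proxNC C Ω x) {s : ℝ} (hs : 0 < s) :
    s • v ∈ proxNC C Ω x := by
  obtain ⟨t, ht, hmem⟩ := hv
  exact ⟨t/s, div_pos ht hs, by rwa [smul_smul, div_mul_cancel₀ _ (ne_of_gt hs)]⟩

end Cone

section Uniformize
variable {E : Type*} [NormedAddCommGroup E] [InnerProductSpace ℝ E] [FiniteDimensional ℝ E]
variable {F' : Type*} [NormedAddCommGroup F'] [InnerProductSpace ℝ F'] [FiniteDimensional ℝ F']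

lemma uniformize (C : Set E) (F : E → Set F') (xb : E) (yb : F') (κ μ : ℝ)
    (hκ : 0 ≤ κ) (hμ : κ < μ)
    (hbound : ∀ ystar : F', ∀ xstar ∈ coderivWRT C F xb yb ystar, ‖xstar‖ ≤ κ * ‖ystar‖) :
    ∃ δ > (0:ℝ), ∀ z ∈ gphL2 F ∩ cylL2 C, dist z (toL2 xb yb) ≤ δ →
      ∀ v ∈ proxNC (cylL2 C) (gphL2 F ∩ cylL2 C) z, ‖v.fst‖ ≤ μ * ‖v.snd‖ := by
  by_contra hcon
  push_neg at hcon
  have hseq : ∀ k : ℕ, ∃ z ∈ gphL2 F ∩ cylL2 C, dist z (toL2 xb yb) ≤ 1/(k+1) ∧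
      ∃ v ∈ proxNC (cylL2 C) (gphL2 F ∩ cylL2 C) z, μ * ‖v.snd‖ < ‖v.fst‖ := by
    intro k
    obtain ⟨z, hz1, hz2, v, hv1, hv2⟩ := hcon (1/(k+1)) (by positivity)
    exact ⟨z, hz1, hz2, v, hv1, hv2⟩
  choose z hzS hzd v hvP hvlt using hseq
  -- normalize
  have hvne : ∀ k, ‖v k‖ ≠ 0 := by
    intro k h0
    have h1 : ‖(v k).fst‖ ≤ ‖v k‖ := l2_norm_fst_le _
    have h2 : (0:ℝ) ≤ μ * ‖(v k).snd‖ :=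
      mul_nonneg (le_of_lt (lt_of_le_of_lt hκ hμ)) (norm_nonneg _)
    have := hvlt k
    rw [h0] at h1
    linarith
  set w : ℕ → WithLp 2 (E × F') := fun k => ‖v k‖⁻¹ • v k with hw
  have hvpos : ∀ k, (0:ℝ) < ‖v k‖ := fun k => (hvne k).lt_of_le' (norm_nonneg _)
  have hwP : ∀ k, w k ∈ proxNC (cylL2 C) (gphL2 F ∩ cylL2 C) (z k) := fun k =>
    proxNC_smul (hvP k) (inv_pos.mpr (hvpos k))
  have hw1 : ∀ k, ‖w k‖ = 1 := by
    intro k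
    rw [hw]
    simp only [norm_smul, norm_inv, norm_norm]
    exact inv_mul_cancel₀ (hvne k)
  have hwsphere : ∀ k, w k ∈ Metric.sphere (0 : WithLp 2 (E × F')) 1 := by
    intro k; rw [mem_sphere_zero_iff_norm]; exact hw1 k
  obtain ⟨a, ha, φ, hφ, hlim⟩ :=
    (isCompact_sphere (0 : WithLp 2 (E × F')) 1).tendsto_subseq hwsphere
  -- continuity of components
  have hcfst : Continuous (fun p : WithLp 2 (E × F') => p.fst) :=
    continuous_fst.comp (WithLp.prod_continuous_ofLp 2 E F')
  have hcsnd : Continuous (fun p : WithLp 2 (E × F') => p.snd) :=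
    continuous_snd.comp (WithLp.prod_continuous_ofLp 2 E F')
  -- z ∘ φ tends to the base point
  have hztend : Tendsto (fun j => z (φ j)) atTop (nhds (toL2 xb yb)) := by
    rw [tendsto_iff_dist_tendsto_zero]
    apply squeeze_zero (fun j => dist_nonneg)
      (fun j => le_trans (hzd (φ j)) ?_) tendsto_one_div_add_atTop_nhds_zero_nat
    have h6 : j ≤ φ j := hφ.le_apply
    apply one_div_le_one_div_of_le (by positivity)
    exact_mod_cast by omega
  -- a is in the limiting normal cone
  have haLim : a ∈ limNC (cylL2 C) (gphL2 F ∩ cylL2 C) (toL2 xb yb) :=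
    ⟨fun j => z (φ j), fun j => w (φ j), fun j => ⟨hzS (φ j), (hzS (φ j)).2⟩, hztend,
      fun j => hwP (φ j), hlim⟩
  -- coderivative bound applies to a
  have heta : toL2 a.fst a.snd = a := rfl
  have hcod : a.fst ∈ coderivWRT C F xb yb (-a.snd) := by
    simp only [coderivWRT, Set.mem_setOf_eq, neg_neg, heta]
    exact haLim
  have hb := hbound (-a.snd) a.fst hcod
  rw [norm_neg] at hb
  -- the scaled inequality passes to the limit
  have hwlt : ∀ k, μ * ‖(w k).snd‖ ≤ ‖(w k).fst‖ := by
    intro k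
    have h1 : (w k).fst = ‖v k‖⁻¹ • (v k).fst := rfl
    have h2 : (w k).snd = ‖v k‖⁻¹ • (v k).snd := rfl
    rw [h1, h2, norm_smul, norm_smul, norm_inv, norm_norm]
    rw [mul_left_comm]
    apply mul_le_mul_of_nonneg_left (le_of_lt (hvlt k)) (by positivity)
  have hlim1 : Tendsto (fun j => ‖(w (φ j)).fst‖) atTop (nhds ‖a.fst‖) :=
    ((hcfst.norm).continuousAt.tendsto.comp hlim)
  have hlim2 : Tendsto (fun j => μ * ‖(w (φ j)).snd‖) atTop (nhds (μ * ‖a.snd‖)) :=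
    (((hcsnd.norm).const_smul μ).continuousAt.tendsto.comp hlim)
  have hfinal : μ * ‖a.snd‖ ≤ ‖a.fst‖ :=
    le_of_tendsto_of_tendsto' hlim2 hlim1 (fun j => hwlt (φ j))
  -- contradiction
  have ha1 : ‖a‖ = 1 := mem_sphere_zero_iff_norm.mp ha
  have hsq := WithLp.prod_norm_sq_eq_of_L2 a
  rw [ha1] at hsq
  have hs0 : ‖a.snd‖ = 0 := by nlinarith [norm_nonneg a.snd, norm_nonneg a.fst]
  have hf0 : ‖a.fst‖ = 0 := by nlinarith [norm_nonneg a.fst]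
  rw [hs0, hf0] at hsq
  norm_num at hsq

end Uniformize
set_option maxHeartbeats 1000000 in
/-- Theorem 1, sufficiency: the coderivative bound `‖x*‖ ≤ κ‖y*‖` yields the Aubin
property with respect to `C` with any constant `κ̃ > κ`. -/
theorem stmt9 {n m : ℕ} (C : Set (EuclideanSpace ℝ (Fin n)))
    (hCne : C.Nonempty) (hCcl : IsClosed C) (hCcv : Convex ℝ C)
    (F : EuclideanSpace ℝ (Fin n) → Set (EuclideanSpace ℝ (Fin m))) (xb : EuclideanSpace ℝ (Fin n)) (yb : EuclideanSpace ℝ (Fin m))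
    (hgph : yb ∈ F xb) (hxbC : xb ∈ C)
    (hloc : ∃ r > (0 : ℝ), IsClosed (gphL2 F ∩ Metric.closedBall (toL2 xb yb) r))
    (κ : ℝ) (hκ : 0 ≤ κ)
    (hbound : ∀ ystar : EuclideanSpace ℝ (Fin m), ∀ xstar ∈ coderivWRT C F xb yb ystar,
      ‖xstar‖ ≤ κ * ‖ystar‖) :
    ∀ κt : ℝ, κ < κt → AubinWRT C F xb yb κt := by
  intro κt hκt
  obtain ⟨r, hr, hclosed⟩ := hloc
  -- constants
  obtain ⟨μ, hμdef⟩ : ∃ t : ℝ, t = (κ + κt)/2 := ⟨_, rfl⟩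
  have hμκ : κ < μ := by rw [hμdef]; linarith
  have hμκt : μ < κt := by rw [hμdef]; linarith
  have hμpos : 0 < μ := lt_of_le_of_lt hκ hμκ
  obtain ⟨l, hldef⟩ : ∃ t : ℝ, t = (μ + κt)/2 := ⟨_, rfl⟩
  have hμl : μ < l := by rw [hldef]; linarith
  have hlκt : l < κt := by rw [hldef]; linarith
  have hlpos : 0 < l := lt_trans hμpos hμl
  obtain ⟨σ, hσdef⟩ : ∃ t : ℝ, t = (κt^2 - l^2)/(2*l) := ⟨_, rfl⟩
  have hσpos : 0 < σ := by
    rw [hσdef]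
    apply div_pos _ (by linarith)
    have h9 : 0 < (κt - l) * (κt + l) := mul_pos (by linarith) (by linarith)
    nlinarith [h9]
  have hkey : l^2 + 2*σ*l = κt^2 := by
    rw [hσdef]
    field_simp
    ring
  obtain ⟨δ, hδ, hunif⟩ := uniformize C F xb yb κ μ hκ hμκ hbound
  obtain ⟨ρ, hρdef⟩ : ∃ t : ℝ, t = min δ r := ⟨_, rfl⟩
  have hρpos : 0 < ρ := by rw [hρdef]; exact lt_min hδ hr
  have hρr : ρ ≤ r := by rw [hρdef]; exact min_le_right _ _
  have hρδ : ρ ≤ δ := by rw [hρdef]; exact min_le_left _ _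
  obtain ⟨C₁, hC₁def⟩ : ∃ t : ℝ, t = (σ + l) * (1 + 1/l) := ⟨_, rfl⟩
  have hC₁pos : 0 < C₁ := by
    rw [hC₁def]
    apply mul_pos (by linarith)
    have : 0 < 1/l := by positivity
    linarith
  obtain ⟨C₂, hC₂def⟩ : ∃ t : ℝ, t = 2*(C₁ + 1) := ⟨_, rfl⟩
  have hC₂pos : 0 < C₂ := by rw [hC₂def]; linarith
  have hC₂two : 2 ≤ C₂ := by rw [hC₂def]; linarith
  obtain ⟨η, hηdef⟩ : ∃ t : ℝ, t = ρ/(2*C₂) := ⟨_, rfl⟩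
  have hηpos : 0 < η := by rw [hηdef]; positivity
  have h2ηρ : 2*η ≤ ρ := by
    rw [hηdef, show 2*(ρ/(2*C₂)) = ρ/C₂ by field_simp]
    exact div_le_self (le_of_lt hρpos) (by linarith)
  have hηC₂ : η * C₂ = ρ/2 := by
    rw [hηdef]; field_simp
  -- the ambient L2 space and key sets
  obtain ⟨zbar, hzbardef⟩ : ∃ t : WithLp 2 (EuclideanSpace ℝ (Fin n) × EuclideanSpace ℝ (Fin m)),
    t = toL2 xb yb := ⟨_, rfl⟩
  rw [← hzbardef] at hclosed hunif
  obtain ⟨S, hSdef⟩ : ∃ t : Set (WithLp 2 (EuclideanSpace ℝ (Fin n) × EuclideanSpace ℝ (Fin m))),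
    t = gphL2 F ∩ cylL2 C := ⟨_, rfl⟩
  rw [← hSdef] at hunif
  have hcfst : Continuous
      (fun p : WithLp 2 (EuclideanSpace ℝ (Fin n) × EuclideanSpace ℝ (Fin m)) => p.fst) :=
    continuous_fst.comp (WithLp.prod_continuous_ofLp 2 _ _)
  have hcsnd : Continuous
      (fun p : WithLp 2 (EuclideanSpace ℝ (Fin n) × EuclideanSpace ℝ (Fin m)) => p.snd) :=
    continuous_snd.comp (WithLp.prod_continuous_ofLp 2 _ _)
  have hcyl_closed :
      IsClosed (cylL2 C : Set (WithLp 2 (EuclideanSpace ℝ (Fin n) × EuclideanSpace ℝ (Fin m)))) :=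
    hCcl.preimage hcfst
  obtain ⟨K, hKdef⟩ : ∃ t : Set (WithLp 2 (EuclideanSpace ℝ (Fin n) × EuclideanSpace ℝ (Fin m))),
    t = S ∩ Metric.closedBall zbar ρ := ⟨_, rfl⟩
  have hKeq : K = (gphL2 F ∩ Metric.closedBall zbar r) ∩ (cylL2 C ∩ Metric.closedBall zbar ρ) := by
    rw [hKdef, hSdef]
    ext p
    constructor
    · rintro ⟨⟨h1, h2⟩, h3⟩
      exact ⟨⟨h1, (Metric.closedBall_subset_closedBall hρr) h3⟩, h2, h3⟩
    · rintro ⟨⟨h1, _⟩, h2, h3⟩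
      exact ⟨⟨h1, h2⟩, h3⟩
  have hKclosed : IsClosed K := by
    rw [hKeq]
    exact hclosed.inter (hcyl_closed.inter Metric.isClosed_closedBall)
  have hKsub : K ⊆ Metric.closedBall zbar ρ := by
    rw [hKdef]; exact inter_subset_right
  have hKcompact : IsCompact K :=
    (isCompact_closedBall zbar ρ).of_isClosed_subset hKclosed hKsub
  -- the Aubin property with the chosen neighborhoods
  refine ⟨Metric.ball xb η, Metric.ball_mem_nhds _ hηpos, Metric.ball yb η,
    Metric.ball_mem_nhds _ hηpos, ?_⟩
  rintro x ⟨hxC, hxU⟩ u ⟨huC, huU⟩ y ⟨hyF, hyV⟩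
  rcases eq_or_ne u x with he | hne
  · exact ⟨y, by rw [← he]; exact hyF, by simp [he, le_of_lt (lt_of_le_of_lt hκ hκt)]⟩
  obtain ⟨d, hddef⟩ : ∃ t : ℝ, t = ‖u - x‖ := ⟨_, rfl⟩
  have hdpos : 0 < d := by
    rw [hddef, norm_pos_iff]
    exact sub_ne_zero_of_ne hne
  obtain ⟨ε, hεdef⟩ : ∃ t : ℝ, t = σ * d := ⟨_, rfl⟩
  have hεpos : 0 < ε := by rw [hεdef]; exact mul_pos hσpos hdpos
  -- basic smallness facts
  have hd2η : d < 2*η := by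
    have h1 : ‖u - xb‖ < η := by rw [← dist_eq_norm]; exact huU
    have h2 : ‖x - xb‖ < η := by rw [← dist_eq_norm]; exact hxU
    calc d ≤ ‖u - xb‖ + ‖x - xb‖ := by
            rw [hddef, show u - x = (u - xb) - (x - xb) by abel]
            exact norm_sub_le _ _
      _ < 2*η := by linarith
  have hfst_sub : ∀ p q : WithLp 2 (EuclideanSpace ℝ (Fin n) × EuclideanSpace ℝ (Fin m)),
      (p - q).fst = p.fst - q.fst := fun p q => rfl
  have hsnd_sub : ∀ p q : WithLp 2 (EuclideanSpace ℝ (Fin n) × EuclideanSpace ℝ (Fin m)),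
      (p - q).snd = p.snd - q.snd := fun p q => rfl
  have hxy_dist : ∀ (a : EuclideanSpace ℝ (Fin n)) (b : EuclideanSpace ℝ (Fin m))
      (a' : EuclideanSpace ℝ (Fin n)) (b' : EuclideanSpace ℝ (Fin m)),
      dist (toL2 a b) (toL2 a' b') ≤ ‖a - a'‖ + ‖b - b'‖ := by
    intro a b a' b'
    rw [dist_eq_norm]
    exact l2_norm_le_add _
  have huyK : toL2 u y ∈ K := by
    rw [hKdef, hSdef]
    refine ⟨⟨hyF, huC⟩, ?_⟩
    rw [Metric.mem_closedBall]
    have h1 : ‖u - xb‖ < η := by rw [← dist_eq_norm]; exact huU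
    have h2 : ‖y - yb‖ < η := by rw [← dist_eq_norm]; exact hyV
    have h3 := hxy_dist u y xb yb
    rw [hzbardef]
    linarith
  -- minimize Φ over K
  obtain ⟨Φ, hΦdef⟩ : ∃ t : (WithLp 2 (EuclideanSpace ℝ (Fin n) × EuclideanSpace ℝ (Fin m))) → ℝ,
    t = fun p => Real.sqrt (‖p.snd - y‖^2 + ε^2) + l * ‖p.fst - x‖ := ⟨_, rfl⟩
  have hΦapp : ∀ p, Φ p = Real.sqrt (‖p.snd - y‖^2 + ε^2) + l * ‖p.fst - x‖ := by
    intro p; rw [hΦdef]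
  have hΦcont : Continuous Φ := by
    rw [hΦdef]
    apply Continuous.add
    · exact Real.continuous_sqrt.comp
        ((((hcsnd.sub continuous_const).norm.pow 2)).add continuous_const)
    · exact continuous_const.mul ((hcfst.sub continuous_const).norm)
  obtain ⟨z', hz'K, hmin⟩ := hKcompact.exists_isMinOn ⟨toL2 u y, huyK⟩ hΦcont.continuousOn
  have hminle : ∀ z ∈ K, Φ z' ≤ Φ z := fun z hz => hmin hz
  have hz'S : z' ∈ S := by
    rw [hKdef] at hz'K; exact hz'K.1
  have hz'gph : z' ∈ gphL2 F := by rw [hSdef] at hz'S; exact hz'S.1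
  have hz'cyl : z'.fst ∈ C := by rw [hSdef] at hz'S; exact hz'S.2
  have hval : Φ z' ≤ ε + l * d := by
    have h0 : Φ (toL2 u y) = ε + l * d := by
      rw [hΦapp]
      have h1 : (toL2 u y).snd - y = 0 := sub_self y
      have h2 : (toL2 u y).fst = u := rfl
      rw [h1, h2, norm_zero, hddef]
      rw [show (0:ℝ)^2 + ε^2 = ε^2 by ring, Real.sqrt_sq (le_of_lt hεpos)]
    rw [← h0]
    exact hminle _ huyK
  obtain ⟨g, hgdef⟩ : ∃ t : ℝ, t = Real.sqrt (‖z'.snd - y‖^2 + ε^2) := ⟨_, rfl⟩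
  have hgpos : 0 < g := by
    rw [hgdef]
    apply Real.sqrt_pos.mpr
    positivity
  have hgsq : g^2 = ‖z'.snd - y‖^2 + ε^2 := by
    rw [hgdef]; exact Real.sq_sqrt (by positivity)
  have hΦz' : Φ z' = g + l * ‖z'.fst - x‖ := by rw [hΦapp, ← hgdef]
  have hgle : g ≤ ε + l * d := by
    have : 0 ≤ l * ‖z'.fst - x‖ := by positivity
    rw [hΦz'] at hval
    linarith
  have hyg : ‖z'.snd - y‖ ≤ g := by
    rw [hgdef]
    calc ‖z'.snd - y‖ = Real.sqrt (‖z'.snd - y‖^2) := (Real.sqrt_sq (norm_nonneg _)).symm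
      _ ≤ Real.sqrt (‖z'.snd - y‖^2 + ε^2) :=
          Real.sqrt_le_sqrt (le_add_of_nonneg_right (sq_nonneg ε))
  have hyd : ‖z'.snd - y‖ ≤ ε + l * d := le_trans hyg hgle
  have hxd : ‖z'.fst - x‖ ≤ (ε + l * d)/l := by
    rw [hΦz'] at hval
    rw [le_div_iff₀ hlpos]
    linarith [hgpos]
  -- z' is close to zbar
  have hz'close : dist z' zbar ≤ ρ/2 := by
    have h1 : dist z' (toL2 x y) ≤ ‖z'.fst - x‖ + ‖z'.snd - y‖ := by
      rw [dist_eq_norm]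
      have := l2_norm_le_add (z' - toL2 x y)
      rwa [hfst_sub, hsnd_sub] at this
    have h2 : dist (toL2 x y) zbar ≤ ‖x - xb‖ + ‖y - yb‖ := by
      rw [hzbardef]; exact hxy_dist x y xb yb
    have h3 : ‖x - xb‖ < η := by rw [← dist_eq_norm]; exact hxU
    have h4 : ‖y - yb‖ < η := by rw [← dist_eq_norm]; exact hyV
    have h5 : ‖z'.fst - x‖ + ‖z'.snd - y‖ ≤ d * C₁ := by
      have hεd : ε + l*d = d*(σ+l) := by rw [hεdef]; ring
      have e1 : ‖z'.fst - x‖ ≤ d*(σ+l)/l := by rw [← hεd]; exact hxd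
      have e2 : ‖z'.snd - y‖ ≤ d*(σ+l) := by rw [← hεd]; exact hyd
      have : d*C₁ = d*(σ+l)/l + d*(σ+l) := by
        rw [hC₁def]; field_simp; ring
      linarith
    have h6 : d * C₁ < 2*η*C₁ := mul_lt_mul_of_pos_right hd2η hC₁pos
    have h7 : dist z' zbar ≤ dist z' (toL2 x y) + dist (toL2 x y) zbar := dist_triangle _ _ _
    have h8 : 2*η*C₁ + 2*η = η * C₂ := by rw [hC₂def]; ring
    linarith [hηC₂]
  by_cases hxx : z'.fst = x
  · -- the minimizer sits above x : done
    refine ⟨z'.snd, ?_, ?_⟩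
    · show z'.snd ∈ F x
      rw [← hxx]
      exact hz'gph
    · have h2 : g ≤ ε + l * d := hgle
      have hg2 : g^2 ≤ (ε + l*d)^2 := pow_le_pow_left₀ (le_of_lt hgpos) hgle 2
      have h3 : ‖z'.snd - y‖^2 ≤ (ε + l*d)^2 - ε^2 := by linarith [hgsq]
      have h4 : (ε + l*d)^2 - ε^2 = (κt*d)^2 := by
        rw [hεdef]
        linear_combination (d^2) * hkey
      rw [norm_sub_rev, ← hddef]
      calc ‖z'.snd - y‖ = Real.sqrt (‖z'.snd - y‖^2) := (Real.sqrt_sq (norm_nonneg _)).symm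
        _ ≤ Real.sqrt ((κt*d)^2) := by
            apply Real.sqrt_le_sqrt; rw [← h4]; exact h3
        _ = κt * d := Real.sqrt_sq (mul_nonneg (by linarith) (le_of_lt hdpos))
  · -- the minimizer is off x : contradiction with the coderivative bound
    exfalso
    have hxxnorm : 0 < ‖z'.fst - x‖ := by
      rw [norm_pos_iff]; exact sub_ne_zero_of_ne hxx
    obtain ⟨vx, hvxdef⟩ : ∃ t : EuclideanSpace ℝ (Fin n),
      t = (l / ‖z'.fst - x‖) • (x - z'.fst) := ⟨_, rfl⟩
    obtain ⟨vy, hvydef⟩ : ∃ t : EuclideanSpace ℝ (Fin m),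
      t = g⁻¹ • (y - z'.snd) := ⟨_, rfl⟩
    obtain ⟨v, hvdef⟩ : ∃ t : WithLp 2 (EuclideanSpace ℝ (Fin n) × EuclideanSpace ℝ (Fin m)),
      t = toL2 vx vy := ⟨_, rfl⟩
    have hvfst : v.fst = vx := by rw [hvdef]; rfl
    have hvsnd : v.snd = vy := by rw [hvdef]; rfl
    obtain ⟨c, hcdef⟩ : ∃ t : ℝ, t = l/(2*‖z'.fst - x‖) + 1/(2*g) := ⟨_, rfl⟩
    have hcpos : 0 < c := by rw [hcdef]; positivity
    -- the key quadratic inequality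
    have h1 : ∀ z ∈ S, ‖z - z'‖ ≤ ρ/2 → ⟪v, z - z'⟫ ≤ c * ‖z - z'‖^2 := by
      intro z hzS hzd'
      have hzK : z ∈ K := by
        rw [hKdef]
        refine ⟨hzS, ?_⟩
        rw [Metric.mem_closedBall]
        have hzz' : dist z z' ≤ ρ/2 := by rw [dist_eq_norm]; exact hzd'
        calc dist z zbar ≤ dist z z' + dist z' zbar := dist_triangle _ _ _
          _ ≤ ρ/2 + ρ/2 := add_le_add hzz' hz'close
          _ = ρ := by ring
      have hm := hminle z hzK
      obtain ⟨hx_, hhx⟩ : ∃ t : EuclideanSpace ℝ (Fin n), t = z.fst - z'.fst := ⟨_, rfl⟩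
      obtain ⟨hy_, hhy⟩ : ∃ t : EuclideanSpace ℝ (Fin m), t = z.snd - z'.snd := ⟨_, rfl⟩
      -- expansion of the x-term
      have e1 : ‖z.fst - x‖ ≤ ‖z'.fst - x‖ + ⟪z'.fst - x, hx_⟫/‖z'.fst - x‖
          + ‖hx_‖^2/(2*‖z'.fst - x‖) := by
        have := norm_expand x z'.fst hx_ hxx
        have heq : z'.fst + hx_ - x = z.fst - x := by rw [hhx]; abel
        rwa [heq] at this
      -- expansion of the y-term
      have e2 : Real.sqrt (‖z.snd - y‖^2 + ε^2) ≤ g + ⟪z'.snd - y, hy_⟫/g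
          + ‖hy_‖^2/(2*g) := by
        have hBeq : ‖z.snd - y‖^2 + ε^2
            = g^2 + (2*⟪z'.snd - y, hy_⟫ + ‖hy_‖^2) := by
          have heq : z.snd - y = (z'.snd - y) + hy_ := by rw [hhy]; abel
          rw [heq, @norm_add_sq_real, hgsq]; ring
        have hB0 : 0 ≤ g^2 + (2*⟪z'.snd - y, hy_⟫ + ‖hy_‖^2) := by
          rw [← hBeq]; positivity
        rw [hBeq]
        calc Real.sqrt (g^2 + (2*⟪z'.snd - y, hy_⟫ + ‖hy_‖^2))
            ≤ g + (2*⟪z'.snd - y, hy_⟫ + ‖hy_‖^2)/(2*g) := sqrt_quad hgpos hB0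
          _ = g + ⟪z'.snd - y, hy_⟫/g + ‖hy_‖^2/(2*g) := by field_simp; ring
      -- combine with minimality
      have hcomb : 0 ≤ l*⟪z'.fst - x, hx_⟫/‖z'.fst - x‖ + ⟪z'.snd - y, hy_⟫/g
          + l*‖hx_‖^2/(2*‖z'.fst - x‖) + ‖hy_‖^2/(2*g) := by
        have hm' : g + l*‖z'.fst - x‖ ≤ Real.sqrt (‖z.snd - y‖^2 + ε^2) + l*‖z.fst - x‖ := by
          rw [← hΦz', ← hΦapp]
          exact hm
        have e1' : l*‖z.fst - x‖ ≤ l*‖z'.fst - x‖ + l*⟪z'.fst - x, hx_⟫/‖z'.fst - x‖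
            + l*‖hx_‖^2/(2*‖z'.fst - x‖) := by
          have h7 := mul_le_mul_of_nonneg_left e1 (le_of_lt hlpos)
          calc l*‖z.fst - x‖ ≤ _ := h7
            _ = l*‖z'.fst - x‖ + l*⟪z'.fst - x, hx_⟫/‖z'.fst - x‖
                + l*‖hx_‖^2/(2*‖z'.fst - x‖) := by ring
        linarith
      -- compute the inner product
      have hinner : ⟪v, z - z'⟫ = -(l*⟪z'.fst - x, hx_⟫/‖z'.fst - x‖ + ⟪z'.snd - y, hy_⟫/g) := by
        have hip := WithLp.prod_inner_apply (𝕜 := ℝ) v (z - z')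
        rw [hip]
        change ⟪v.fst, (z - z').fst⟫ + ⟪v.snd, (z - z').snd⟫ = _
        rw [hfst_sub, hsnd_sub, ← hhx, ← hhy, hvfst, hvsnd, hvxdef, hvydef]
        rw [real_inner_smul_left, real_inner_smul_left]
        have hn1 : ⟪x - z'.fst, hx_⟫ = -⟪z'.fst - x, hx_⟫ := by
          rw [← neg_sub, inner_neg_left]
        have hn2 : ⟪y - z'.snd, hy_⟫ = -⟪z'.snd - y, hy_⟫ := by
          rw [← neg_sub, inner_neg_left]
        rw [hn1, hn2]
        field_simp
        ring
      rw [hinner]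
      have hb1 : ‖hx_‖ ≤ ‖z - z'‖ := by
        rw [hhx, ← hfst_sub]; exact l2_norm_fst_le _
      have hb2 : ‖hy_‖ ≤ ‖z - z'‖ := by
        rw [hhy, ← hsnd_sub]; exact l2_norm_snd_le _
      have hsq1 : ‖hx_‖^2 ≤ ‖z - z'‖^2 := pow_le_pow_left₀ (norm_nonneg _) hb1 2
      have hsq2 : ‖hy_‖^2 ≤ ‖z - z'‖^2 := pow_le_pow_left₀ (norm_nonneg _) hb2 2
      have hc2 : c * ‖z - z'‖^2 = l*‖z - z'‖^2/(2*‖z'.fst - x‖) + ‖z - z'‖^2/(2*g) := by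
        rw [hcdef]; field_simp
      have ht1 : l*‖hx_‖^2/(2*‖z'.fst - x‖) ≤ l*‖z - z'‖^2/(2*‖z'.fst - x‖) := by gcongr
      have ht2 : ‖hy_‖^2/(2*g) ≤ ‖z - z'‖^2/(2*g) := by gcongr
      linarith
    -- choose the step length t
    obtain ⟨t, htdef⟩ : ∃ s : ℝ,
      s = min (1/(2*(c+1))) (min ((ρ/2)/(2*(‖v‖+1))) (‖z'.fst - x‖/(l+1))) := ⟨_, rfl⟩
    have htpos : 0 < t := by
      rw [htdef]
      exact lt_min (by positivity) (lt_min (by positivity) (by positivity))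
    have htc : 2*t*c ≤ 1 := by
      have h2 : t ≤ 1/(2*(c+1)) := by rw [htdef]; exact min_le_left _ _
      rw [le_div_iff₀ (by positivity)] at h2
      linarith [htpos.le]
    have htv : 2*t*‖v‖ ≤ ρ/2 := by
      have h2 : t ≤ (ρ/2)/(2*(‖v‖+1)) := by
        rw [htdef]; exact le_trans (min_le_right _ _) (min_le_left _ _)
      rw [le_div_iff₀ (by positivity)] at h2
      linarith [htpos.le]
    have htl : t*l ≤ ‖z'.fst - x‖ := by
      have h2 : t ≤ ‖z'.fst - x‖/(l+1) := by
        rw [htdef]; exact le_trans (min_le_right _ _) (min_le_right _ _)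
      rw [le_div_iff₀ (by positivity)] at h2
      linarith [htpos.le]
    -- z' is a projection of z' + t v
    have hproj : z' ∈ projSet (z' + t • v) S :=
      mem_projSet_of_quad S z' hz'S v c (ρ/2) t (le_of_lt hcpos) htpos htc htv h1
    -- hence v is a proximal normal at z'
    have hSC : S ∩ cylL2 C = S := by
      rw [hSdef, inter_assoc, inter_self]
    have hcylmem : z' + t • v ∈ cylL2 C := by
      have hadd : (z' + t • v).fst = z'.fst + t • vx := by rw [hvdef]; rfl
      show ((z' + t • v).fst) ∈ C
      rw [hadd]
      obtain ⟨s', hs'def⟩ : ∃ w : ℝ, w = t * (l / ‖z'.fst - x‖) := ⟨_, rfl⟩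
      have hs'pos : 0 < s' := by rw [hs'def]; positivity
      have hs'le : s' ≤ 1 := by
        rw [hs'def, mul_div_assoc', div_le_one hxxnorm]
        linarith
      have hrw2 : z'.fst + t • vx = (1 - s') • z'.fst + s' • x := by
        rw [hvxdef, smul_smul, ← hs'def, sub_smul, one_smul, smul_sub]
        abel
      rw [hrw2]
      exact hCcv hz'cyl hxC (by linarith) (le_of_lt hs'pos) (by ring)
    have hvprox : v ∈ proxNC (cylL2 C) (gphL2 F ∩ cylL2 C) z' := by
      refine ⟨t, htpos, ?_, hcylmem⟩
      show z' ∈ projSet (z' + t • v) ((gphL2 F ∩ cylL2 C) ∩ cylL2 C)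
      rw [← hSdef, hSC]
      exact hproj
    -- apply the uniform proximal normal bound
    have hδz' : dist z' zbar ≤ δ := le_trans hz'close (by linarith)
    have hub := hunif z' hz'S hδz' v (by rw [hSdef]; exact hvprox)
    -- compute the component norms of v
    have hvfstnorm : ‖v.fst‖ = l := by
      have hne9 : ‖x - z'.fst‖ ≠ 0 := by rw [norm_sub_rev]; exact ne_of_gt hxxnorm
      rw [hvfst, hvxdef, norm_smul, Real.norm_eq_abs, abs_of_pos (by positivity),
        norm_sub_rev (z'.fst) x]
      field_simp
    have hvsndnorm : ‖v.snd‖ < 1 := by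
      rw [hvsnd, hvydef, norm_smul, norm_inv, Real.norm_eq_abs, abs_of_pos hgpos]
      rw [inv_mul_lt_iff₀ hgpos, mul_one, norm_sub_rev]
      rcases lt_or_eq_of_le hyg with hlt | heq
      · exact hlt
      · exfalso
        rw [← heq] at hgsq
        have h9 : 0 < ε^2 := pow_pos hεpos 2
        linarith
    rw [hvfstnorm] at hub
    have : μ * ‖v.snd‖ < μ * 1 := mul_lt_mul_of_pos_left hvsndnorm hμpos
    linarith
end

section
/- Let f : ℝ^n → ℝ ∪ {∞}, let C ⊆ ℝ^n be a nonempty closed convex set, let x̄ ∈ C ∩ dom f, and suppose epi f is locally closed around (x̄, f(x̄)). If x̄ is a local solution of the problem min f(x) subject to x ∈ C, i.e. there exists r > 0 such that f(x̄) ≤ f(x) for all x ∈ C ∩ B̄(x̄,r), then 0 ∈ ∂^p_C f(x̄) and ∂^p_C f(x̄) ⊆ ∂_C f(x̄) (hence 0 ∈ ∂_C f(x̄)). -/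
open Set Metric Filter Topology
open scoped RealInnerProductSpace

variable {E : Type*} [NormedAddCommGroup E] [InnerProductSpace ℝ E]
variable {F' : Type*} [NormedAddCommGroup F'] [InnerProductSpace ℝ F']

/-- The real value of `f : E → ℝ ∪ {∞}` (defaulting to `0` outside `dom f`). -/
noncomputable def rv (f : E → WithTop ℝ) (x : E) : ℝ := (f x).untopD 0

/-- The epigraph of `f`, inside the `L²` product `E ×₂ ℝ`. -/
def epiL2 (f : E → WithTop ℝ) : Set (WithLp 2 (E × ℝ)) :=
  {p | f ((WithLp.equiv 2 (E × ℝ)) p).1 ≤ ((((WithLp.equiv 2 (E × ℝ)) p).2 : ℝ) : WithTop ℝ)}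

/-- The epigraphical mapping `𝓔^f(x) = {α | α ≥ f(x)}`. -/
def epiMap (f : E → WithTop ℝ) : E → Set ℝ := fun x => {a : ℝ | f x ≤ (a : WithTop ℝ)}

/-- The limiting subdifferential of `f` at `xb` with respect to `C`:
`∂_C f(xb) = {x* | (x*,-1) ∈ N_{C×ℝ}((xb,f(xb)), epi f)}`. -/
noncomputable def limSubdiffWRT (C : Set E) (f : E → WithTop ℝ) (xb : E) : Set E :=
  {v | toL2 v (-1 : ℝ) ∈ limNC (cylL2 C) (epiL2 f) (toL2 xb (rv f xb))}

/-- The singular (horizon) subdifferential of `f` at `xb` with respect to `C`: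
`∂^∞_C f(xb) = {x* | (x*,0) ∈ N_{C×ℝ}((xb,f(xb)), epi f)}`. -/
noncomputable def singSubdiffWRT (C : Set E) (f : E → WithTop ℝ) (xb : E) : Set E :=
  {v | toL2 v (0 : ℝ) ∈ limNC (cylL2 C) (epiL2 f) (toL2 xb (rv f xb))}

/-- The proximal subdifferential of `f` at `xb` with respect to `C`:
`∂^p_C f(xb) = {x* | (x*,-1) ∈ N^p_{C×ℝ}((xb,f(xb)), epi f)}`. -/
noncomputable def proxSubdiffWRT (C : Set E) (f : E → WithTop ℝ) (xb : E) : Set E :=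
  {v | toL2 v (-1 : ℝ) ∈ proxNC (cylL2 C) (epiL2 f) (toL2 xb (rv f xb))}

/-- Theorem 4: necessary optimality condition — at a local solution of
`min f over C` one has `0 ∈ ∂^p_C f(xb) ⊆ ∂_C f(xb)`. -/
theorem stmt19 {n : ℕ}
    (f : EuclideanSpace ℝ (Fin n) → WithTop ℝ) (C : Set (EuclideanSpace ℝ (Fin n)))
    (hCne : C.Nonempty) (hCcl : IsClosed C) (hCcv : Convex ℝ C)
    (xb : EuclideanSpace ℝ (Fin n)) (hxbC : xb ∈ C) (hxbdom : f xb ≠ ⊤)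
    (hloc : ∃ r > (0 : ℝ), IsClosed (epiL2 f ∩ Metric.closedBall (toL2 xb (rv f xb)) r))
    (r : ℝ) (hr : 0 < r)
    (hmin : ∀ x ∈ C ∩ Metric.closedBall xb r, f xb ≤ f x) :
    (0 : EuclideanSpace ℝ (Fin n)) ∈ proxSubdiffWRT C f xb ∧
    proxSubdiffWRT C f xb ⊆ limSubdiffWRT C f xb := by
  have hfxb : f xb = ((rv f xb : ℝ) : WithTop ℝ) := by
    rcases WithTop.ne_top_iff_exists.1 hxbdom with ⟨a, ha⟩
    rw [← ha]; simp [rv, ← ha]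
  set z : WithLp 2 (EuclideanSpace ℝ (Fin n) × ℝ) := toL2 xb (rv f xb) with hz
  have hzmem : z ∈ epiL2 f ∩ cylL2 C := by
    exact ⟨le_of_eq hfxb, hxbC⟩
  have hSne : (epiL2 f ∩ cylL2 C).Nonempty := ⟨z, hzmem⟩
  constructor
  · -- 0 ∈ proximal subdifferential
    refine ⟨r, hr, ⟨⟨hzmem, ?_⟩, ?_⟩⟩
    · -- ‖z - (z + r • v)‖ = infDist (z + r • v) (epi ∩ cyl)
      have hpfst : (z + r • toL2 (0 : EuclideanSpace ℝ (Fin n)) (-1 : ℝ)).fst = xb := by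
        show xb + r • (0 : EuclideanSpace ℝ (Fin n)) = xb; simp
      have hpsnd : (z + r • toL2 (0 : EuclideanSpace ℝ (Fin n)) (-1 : ℝ)).snd
          = rv f xb - r := by
        show rv f xb + r • (-1 : ℝ) = rv f xb - r; simp; ring
      have hnormzp : ‖z - (z + r • toL2 (0 : EuclideanSpace ℝ (Fin n)) (-1 : ℝ))‖ = r := by
        have hfst : (z - (z + r • toL2 (0 : EuclideanSpace ℝ (Fin n)) (-1 : ℝ))).fst
            = (0 : EuclideanSpace ℝ (Fin n)) := by
          show xb - (xb + r • (0 : EuclideanSpace ℝ (Fin n))) = 0; simp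
        have hsnd : (z - (z + r • toL2 (0 : EuclideanSpace ℝ (Fin n)) (-1 : ℝ))).snd
            = (r : ℝ) := by
          show rv f xb - (rv f xb + r • (-1 : ℝ)) = r; simp
        have h2 : ‖z - (z + r • toL2 (0 : EuclideanSpace ℝ (Fin n)) (-1 : ℝ))‖ ^ 2 = r ^ 2 := by
          rw [WithLp.prod_norm_sq_eq_of_L2, hfst, hsnd]
          simp [Real.norm_eq_abs, abs_of_pos hr]
        nlinarith [norm_nonneg (z - (z + r • toL2 (0 : EuclideanSpace ℝ (Fin n)) (-1 : ℝ)))]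
      rw [hnormzp]
      refine le_antisymm ?_ ?_
      · -- r ≤ infDist
        have key : ∀ q ∈ epiL2 f ∩ cylL2 C,
            r ≤ dist (z + r • toL2 (0 : EuclideanSpace ℝ (Fin n)) (-1 : ℝ)) q := by
          intro q hq
          have hqepi : f q.fst ≤ ((q.snd : ℝ) : WithTop ℝ) := hq.1
          have hqC : q.fst ∈ C := hq.2
          have hd2 : dist (z + r • toL2 (0 : EuclideanSpace ℝ (Fin n)) (-1 : ℝ)) q ^ 2
              = ‖xb - q.fst‖ ^ 2 + ‖rv f xb - r - q.snd‖ ^ 2 := by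
            rw [dist_eq_norm, WithLp.prod_norm_sq_eq_of_L2]
            congr 2
            · rw [show ((z + r • toL2 (0 : EuclideanSpace ℝ (Fin n)) (-1 : ℝ)) - q).fst
                  = (z + r • toL2 (0 : EuclideanSpace ℝ (Fin n)) (-1 : ℝ)).fst - q.fst from rfl,
                hpfst]
            · rw [show ((z + r • toL2 (0 : EuclideanSpace ℝ (Fin n)) (-1 : ℝ)) - q).snd
                  = (z + r • toL2 (0 : EuclideanSpace ℝ (Fin n)) (-1 : ℝ)).snd - q.snd from rfl,
                hpsnd]
          by_cases hball : q.fst ∈ Metric.closedBall xb r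
          · have hle : f xb ≤ f q.fst := hmin q.fst ⟨hqC, hball⟩
            have hle2 : rv f xb ≤ q.snd := by
              have := hle.trans hqepi
              rw [hfxb] at this
              exact_mod_cast this
            have : ‖rv f xb - r - q.snd‖ ^ 2 ≥ r ^ 2 := by
              rw [Real.norm_eq_abs, sq_abs]
              nlinarith
            nlinarith [dist_nonneg (x := z + r • toL2 (0 : EuclideanSpace ℝ (Fin n)) (-1 : ℝ)) (y := q),
              sq_nonneg (‖xb - q.fst‖)]
          · have : r < ‖xb - q.fst‖ := by
              rw [Metric.mem_closedBall, dist_comm, dist_eq_norm] at hball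
              push_neg at hball
              exact hball
            nlinarith [dist_nonneg (x := z + r • toL2 (0 : EuclideanSpace ℝ (Fin n)) (-1 : ℝ)) (y := q),
              sq_nonneg (‖rv f xb - r - q.snd‖)]
        refine le_of_not_gt fun hlt => ?_
        obtain ⟨q, hq, hdlt⟩ := (Metric.infDist_lt_iff hSne).1 hlt
        exact absurd hdlt (not_lt.2 (key q hq))
      · -- infDist ≤ r
        have := Metric.infDist_le_dist_of_mem
          (x := z + r • toL2 (0 : EuclideanSpace ℝ (Fin n)) (-1 : ℝ)) hzmem
        rwa [dist_comm, dist_eq_norm, hnormzp] at this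
    · -- z + r • v ∈ cylL2 C
      show (z + r • toL2 (0 : EuclideanSpace ℝ (Fin n)) (-1 : ℝ)).fst ∈ C
      show xb + r • (0 : EuclideanSpace ℝ (Fin n)) ∈ C
      simpa using hxbC
  · -- prox ⊆ limiting
    intro v hv
    exact ⟨fun _ => z, fun _ => toL2 v (-1), fun _ => hzmem, tendsto_const_nhds,
      fun _ => hv, tendsto_const_nhds⟩
end
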